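/- arXiv:1105.2831 — 5 statements merged into one kernel-verified Lean document; each statement's English description precedes it below -/
import Mathlib

section
/- Pixelated Intermediate Value Theorem: if f : [a,b] → ℝ is continuous and ε > 0, then for every x ∈ [a,b] with x ∉ εℤ, the column of P_ε(f) over x (the intersection of P_ε(f) with the vertical strip I_ε(x) × ℝ, where I_ε(x) is the interval [nε, (n+1)ε] containing x) is a connected set. -/
open Set

/-- The ε-pixel with indices (i,j): the square [(i-1)ε, iε] × [(j-1)ε, jε]. -/
def pixel (ε : ℝ) (i j : ℤ) : Set (ℝ × ℝ) :=
  Icc ((i - 1 : ℤ) * ε) (i * ε) ×ˢ Icc ((j - 1 : ℤ) * ε) (j * ε)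

/-- The ε-pixelation of a set S: the union of all ε-pixels that intersect S. -/
def pixelation (ε : ℝ) (S : Set (ℝ × ℝ)) : Set (ℝ × ℝ) :=
  ⋃ (i : ℤ) (j : ℤ) (_ : (pixel ε i j ∩ S).Nonempty), pixel ε i j

/-- The column of the ε-pixelation of S over an ε-generic point x: the
intersection of the pixelation with the vertical strip I_ε(x) × ℝ, where
I_ε(x) = [⌊x/ε⌋ε, (⌊x/ε⌋+1)ε] is the grid interval containing x. -/
noncomputable def column (ε : ℝ) (S : Set (ℝ × ℝ)) (x : ℝ) : Set (ℝ × ℝ) :=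
  pixelation ε S ∩ (Icc ((⌊x / ε⌋ : ℤ) * ε) ((⌊x / ε⌋ + 1 : ℤ) * ε) ×ˢ (univ : Set ℝ))

/-- The graph of f over [a,b]. -/
def graphOn (f : ℝ → ℝ) (a b : ℝ) : Set (ℝ × ℝ) :=
  (fun x => (x, f x)) '' Icc a b

lemma floor_bounds {ε : ℝ} (hε : 0 < ε) (y : ℝ) :
    (⌊y / ε⌋ : ℝ) * ε ≤ y ∧ y ≤ ((⌊y / ε⌋ : ℝ) + 1) * ε := by
  constructor
  · have h := Int.floor_le (y / ε)
    have : (⌊y / ε⌋ : ℝ) * ε ≤ (y / ε) * ε := by nlinarith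
    calc (⌊y / ε⌋ : ℝ) * ε ≤ (y / ε) * ε := this
    _ = y := by field_simp
  · have h := (Int.lt_floor_add_one (y / ε)).le
    have h2 : (y / ε) * ε ≤ ((⌊y / ε⌋ : ℝ) + 1) * ε := by nlinarith
    calc y = (y / ε) * ε := by field_simp
    _ ≤ ((⌊y / ε⌋ : ℝ) + 1) * ε := h2

/-- Key membership lemma: if `s ∈ [a,b]` and both `s` and `u` lie in the
x-range of the `i`-th pixel column, and `u` lies in the strip of `x`,
then `(u, f s)` belongs to the column. -/
lemma mem_column_aux {a b ε : ℝ} (hε : 0 < ε) {f : ℝ → ℝ} {x : ℝ}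
    {i : ℤ} {u s : ℝ} (hs : s ∈ Icc a b)
    (hsl : ((i : ℝ) - 1) * ε ≤ s) (hsr : s ≤ (i : ℝ) * ε)
    (hul : ((i : ℝ) - 1) * ε ≤ u) (hur : u ≤ (i : ℝ) * ε)
    (hu1 : (⌊x / ε⌋ : ℝ) * ε ≤ u) (hu2 : u ≤ ((⌊x / ε⌋ : ℝ) + 1) * ε) :
    (u, f s) ∈ column ε (graphOn f a b) x := by
  obtain ⟨h1, h2⟩ := floor_bounds hε (f s)
  refine ⟨?_, ?_⟩
  · simp only [pixelation, mem_iUnion]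
    refine ⟨i, ⌊f s / ε⌋ + 1, ⟨(s, f s), ⟨?_, ⟨s, hs, rfl⟩⟩⟩, ?_⟩
    · simp only [pixel, mem_prod, mem_Icc]
      push_cast
      exact ⟨⟨hsl, hsr⟩, by linarith, by linarith⟩
    · simp only [pixel, mem_prod, mem_Icc]
      push_cast
      exact ⟨⟨hul, hur⟩, by linarith, by linarith⟩
  · simp only [mem_prod, mem_Icc, mem_univ, and_true]
    push_cast
    exact ⟨hu1, hu2⟩

/-- Pixelated Intermediate Value Theorem: for a continuous function
f : [a,b] → ℝ and an ε-generic x ∈ [a,b], the column of P_ε(f) over x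
is a connected set. -/
theorem pixelated_IVT (a b ε : ℝ) (hab : a ≤ b) (hε : 0 < ε) (f : ℝ → ℝ)
    (hf : ContinuousOn f (Icc a b)) (x : ℝ) (hx : x ∈ Icc a b)
    (hgen : ∀ n : ℤ, x ≠ n * ε) :
    IsConnected (column ε (graphOn f a b) x) := by
  have hfl := floor_bounds hε x
  set N : ℝ := (⌊x / ε⌋ : ℝ) with hN
  have hp0 : (x, f x) ∈ column ε (graphOn f a b) x := by
    refine mem_column_aux (i := ⌊x / ε⌋ + 1) hε hx ?_ ?_ ?_ ?_ hfl.1 hfl.2 <;>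
      push_cast <;> linarith [hfl.1, hfl.2]
  refine ⟨⟨_, hp0⟩, isPreconnected_of_forall (x, f x) ?_⟩
  rintro ⟨u, v⟩ ⟨hpix, hstrip⟩
  have hstrip0 := hstrip
  simp only [pixelation, mem_iUnion] at hpix
  obtain ⟨i, j, ⟨⟨s', fs'⟩, hspix, hsgraph⟩, hupix⟩ := hpix
  obtain ⟨s, hs, heq⟩ := hsgraph
  injection heq with h1 h2
  subst h1; subst h2
  have hspix0 := hspix
  have hupix0 := hupix
  simp only [pixel, mem_prod, mem_Icc] at hspix hupix
  simp only [mem_prod, mem_Icc, mem_univ, and_true] at hstrip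
  push_cast at hspix hupix hstrip
  -- the clamped point r
  set r : ℝ := max (N * ε) (min s ((N + 1) * ε)) with hr
  have hr1 : ((i : ℝ) - 1) * ε ≤ r :=
    le_max_of_le_right (le_min hspix.1.1 (le_trans hupix.1.1 hstrip.2))
  have hr2 : r ≤ (i : ℝ) * ε :=
    max_le (le_trans hstrip.1 hupix.1.2) (le_trans (min_le_left _ _) hspix.1.2)
  have hrs1 : N * ε ≤ r := le_max_left _ _
  have hrs2 : r ≤ (N + 1) * ε :=
    max_le (by nlinarith) (min_le_right _ _)
  have hra : a ≤ r := le_max_of_le_right (le_min hs.1 (le_trans hx.1 hfl.2))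
  have hrb : r ≤ b := max_le (le_trans hfl.1 hx.2) (le_trans (min_le_left _ _) hs.2)
  have hrab : r ∈ Icc a b := ⟨hra, hrb⟩
  have hsub1 : uIcc s r ⊆ Icc a b := Set.ordConnected_Icc.uIcc_subset hs hrab
  have hsub2 : uIcc r x ⊆ Icc a b := Set.ordConnected_Icc.uIcc_subset hrab hx
  have hsub1' : uIcc s r ⊆ Icc (((i : ℝ) - 1) * ε) ((i : ℝ) * ε) :=
    Set.ordConnected_Icc.uIcc_subset ⟨hspix.1.1, hspix.1.2⟩ ⟨hr1, hr2⟩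
  have hsub2' : uIcc r x ⊆ Icc (N * ε) ((N + 1) * ε) :=
    Set.ordConnected_Icc.uIcc_subset ⟨hrs1, hrs2⟩ ⟨hfl.1, hfl.2⟩
  -- the three connecting sets
  refine ⟨(pixel ε i j ∩ (Icc ((⌊x / ε⌋ : ℤ) * ε) ((⌊x / ε⌋ + 1 : ℤ) * ε) ×ˢ (univ : Set ℝ)))
      ∪ ({r} ×ˢ uIcc (f s) (f r))
      ∪ ((Icc ((⌊x / ε⌋ : ℤ) * ε : ℝ) ((⌊x / ε⌋ + 1 : ℤ) * ε)) ×ˢ uIcc (f r) (f x)),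
    ?_, ?_, ?_, ?_⟩
  · -- subset of the column
    rintro ⟨w1, w2⟩ (hw | hw)
    · rcases hw with ⟨hwpix, hwstrip⟩ | ⟨hw1, hw2⟩
      · exact ⟨mem_iUnion.mpr ⟨i, mem_iUnion.mpr ⟨j, mem_iUnion.mpr
          ⟨⟨(s, f s), hspix0, ⟨s, hs, rfl⟩⟩, hwpix⟩⟩⟩, hwstrip⟩
      · rcases mem_singleton_iff.mp hw1 with rfl
        obtain ⟨s'', hs''mem, rfl⟩ := intermediate_value_uIcc (hf.mono hsub1) hw2
        exact mem_column_aux (i := i) hε (hsub1 hs''mem)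
          (hsub1' hs''mem).1 (hsub1' hs''mem).2 hr1 hr2 hrs1 hrs2
    · obtain ⟨hw1, hw2⟩ := hw
      obtain ⟨s'', hs''mem, rfl⟩ := intermediate_value_uIcc (hf.mono hsub2) hw2
      simp only [mem_Icc] at hw1
      push_cast at hw1
      refine mem_column_aux (i := ⌊x / ε⌋ + 1) hε (hsub2 hs''mem) ?_ ?_ ?_ ?_ hw1.1 hw1.2 <;>
        push_cast <;>
        [linarith [(hsub2' hs''mem).1]; linarith [(hsub2' hs''mem).2];
         linarith [hw1.1]; linarith [hw1.2]]
  · -- base point (x, f x) belongs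
    exact Or.inr ⟨by simp only [mem_Icc]; push_cast; exact ⟨hfl.1, hfl.2⟩, right_mem_uIcc⟩
  · -- the point (u, v) belongs
    exact Or.inl (Or.inl ⟨hupix0, hstrip0⟩)
  · -- preconnectedness
    have hL : IsPreconnected (pixel ε i j ∩
        (Icc ((⌊x / ε⌋ : ℤ) * ε : ℝ) ((⌊x / ε⌋ + 1 : ℤ) * ε) ×ˢ (univ : Set ℝ))) := by
      refine Convex.isPreconnected (Convex.inter ?_ ?_)
      · rw [pixel]; exact (convex_Icc _ _).prod (convex_Icc _ _)
      · exact (convex_Icc _ _).prod convex_univ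
    have hW : IsPreconnected (({r} : Set ℝ) ×ˢ uIcc (f s) (f r)) :=
      ((convex_singleton r).prod (convex_uIcc _ _)).isPreconnected
    have hH : IsPreconnected ((Icc ((⌊x / ε⌋ : ℤ) * ε : ℝ) ((⌊x / ε⌋ + 1 : ℤ) * ε)) ×ˢ
        uIcc (f r) (f x)) :=
      ((convex_Icc _ _).prod (convex_uIcc _ _)).isPreconnected
    have hmemL : (r, f s) ∈ pixel ε i j ∩
        (Icc ((⌊x / ε⌋ : ℤ) * ε : ℝ) ((⌊x / ε⌋ + 1 : ℤ) * ε) ×ˢ (univ : Set ℝ)) := by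
      refine ⟨?_, ?_⟩
      · simp only [pixel, mem_prod, mem_Icc]
        push_cast
        exact ⟨⟨hr1, hr2⟩, hspix.2.1, hspix.2.2⟩
      · simp only [mem_prod, mem_Icc, mem_univ, and_true]
        push_cast
        exact ⟨hrs1, hrs2⟩
    have hmemW1 : ((r, f s) : ℝ × ℝ) ∈ ({r} : Set ℝ) ×ˢ uIcc (f s) (f r) :=
      ⟨rfl, left_mem_uIcc⟩
    have hmemW2 : ((r, f r) : ℝ × ℝ) ∈ ({r} : Set ℝ) ×ˢ uIcc (f s) (f r) :=
      ⟨rfl, right_mem_uIcc⟩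
    have hmemH : ((r, f r) : ℝ × ℝ) ∈ (Icc ((⌊x / ε⌋ : ℤ) * ε : ℝ) ((⌊x / ε⌋ + 1 : ℤ) * ε)) ×ˢ
        uIcc (f r) (f x) := by
      refine ⟨?_, left_mem_uIcc⟩
      simp only [mem_Icc]
      push_cast
      exact ⟨hrs1, hrs2⟩
    have hLW := hL.union (r, f s) hmemL hmemW1 hW
    exact hLW.union (r, f r) (Or.inr hmemW2) hmemH hH
end

section
/- If S = S(β,τ) = {(x,y) : x ∈ [a,b], β(x) ≤ y ≤ τ(x)} is an elementary set, where β, τ : [a,b] → ℝ are continuous with β ≤ τ, then for every x ∈ [a,b] \ εℤ, the column C_ε(S,x) of the ε-pixelation of S over x is connected. -/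
open Set

lemma mem_pixel {ε : ℝ} {i j : ℤ} {p : ℝ × ℝ} :
    p ∈ pixel ε i j ↔
      (((i : ℝ) - 1) * ε ≤ p.1 ∧ p.1 ≤ (i : ℝ) * ε) ∧
        (((j : ℝ) - 1) * ε ≤ p.2 ∧ p.2 ≤ (j : ℝ) * ε) := by
  simp only [pixel, Set.mem_prod, Set.mem_Icc]
  push_cast
  tauto

lemma pixel_isPreconnected (ε : ℝ) (hε : 0 < ε) (i j : ℤ) :
    IsPreconnected (pixel ε i j) := by
  apply Convex.isPreconnected
  exact (convex_Icc _ _).prod (convex_Icc _ _)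

/-- Characterization of when a pixel meets the elementary set. -/
lemma pixel_inter_elementary {a b ε : ℝ} (hε : 0 < ε) {β τ : ℝ → ℝ}
    (hle : ∀ x ∈ Icc a b, β x ≤ τ x) (i j : ℤ) :
    (pixel ε i j ∩ {p : ℝ × ℝ | p.1 ∈ Icc a b ∧ β p.1 ≤ p.2 ∧ p.2 ≤ τ p.1}).Nonempty ↔
      ∃ x' ∈ Icc (((i : ℝ) - 1) * ε) ((i : ℝ) * ε) ∩ Icc a b,
        β x' ≤ (j : ℝ) * ε ∧ ((j : ℝ) - 1) * ε ≤ τ x' := by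
  constructor
  · rintro ⟨p, hp, hpx, hpβ, hpτ⟩
    rw [mem_pixel] at hp
    exact ⟨p.1, ⟨⟨hp.1.1, hp.1.2⟩, hpx⟩, le_trans hpβ hp.2.2, le_trans hp.2.1 hpτ⟩
  · rintro ⟨x', ⟨hx'i, hx'ab⟩, h1, h2⟩
    refine ⟨(x', max (β x') (((j : ℝ) - 1) * ε)), ?_, ?_⟩
    · rw [mem_pixel]
      refine ⟨⟨hx'i.1, hx'i.2⟩, le_max_right _ _, max_le h1 ?_⟩
      nlinarith [hε.le]
    · exact ⟨hx'ab, le_max_left _ _, max_le (hle _ hx'ab) h2⟩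

/-- The set of row-indices of pixels in a fixed column that meet the elementary set is
an interval of integers. -/
lemma Kset_ordConnected {a b ε : ℝ} (hε : 0 < ε) {β τ : ℝ → ℝ}
    (hβ : ContinuousOn β (Icc a b)) (hτ : ContinuousOn τ (Icc a b))
    (hle : ∀ x ∈ Icc a b, β x ≤ τ x) (i : ℤ) :
    OrdConnected {j : ℤ |
      (pixel ε i j ∩ {p : ℝ × ℝ | p.1 ∈ Icc a b ∧ β p.1 ≤ p.2 ∧ p.2 ≤ τ p.1}).Nonempty} := by
  constructor
  intro j1 hj1 j2 hj2 j hj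
  simp only [mem_setOf_eq, pixel_inter_elementary hε hle] at hj1 hj2 ⊢
  obtain ⟨x1, hx1D, hx1β, hx1τ⟩ := hj1
  obtain ⟨x2, hx2D, hx2β, hx2τ⟩ := hj2
  have hj1j : (j1 : ℝ) ≤ (j : ℝ) := by exact_mod_cast hj.1
  have hjj2 : (j : ℝ) ≤ (j2 : ℝ) := by exact_mod_cast hj.2
  by_cases hcase : ((j : ℝ) - 1) * ε ≤ τ x1
  · exact ⟨x1, hx1D, le_trans hx1β (by nlinarith), hcase⟩
  · push_neg at hcase
    -- τ x1 < (j-1)ε ≤ (j2-1)ε ≤ τ x2 : use the intermediate value theorem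
    have hD : OrdConnected (Icc (((i : ℝ) - 1) * ε) ((i : ℝ) * ε) ∩ Icc a b) :=
      ordConnected_Icc.inter ordConnected_Icc
    have hsub : uIcc x1 x2 ⊆ Icc (((i : ℝ) - 1) * ε) ((i : ℝ) * ε) ∩ Icc a b :=
      hD.uIcc_subset hx1D hx2D
    have hsub' : uIcc x1 x2 ⊆ Icc a b := hsub.trans (inter_subset_right)
    have hcont : ContinuousOn τ (uIcc x1 x2) := hτ.mono hsub'
    have hmem : ((j : ℝ) - 1) * ε ∈ uIcc (τ x1) (τ x2) := by
      apply Icc_subset_uIcc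
      constructor
      · linarith
      · nlinarith
    obtain ⟨x', hx', hτx'⟩ := intermediate_value_uIcc hcont hmem
    refine ⟨x', hsub hx', ?_, le_of_eq hτx'.symm⟩
    have := hle x' (hsub' hx')
    nlinarith

/-- For an elementary set S = {(x,y) : x ∈ [a,b], β(x) ≤ y ≤ τ(x)} with β, τ
continuous and β ≤ τ, the column of the ε-pixelation of S over any ε-generic
x ∈ [a,b] is connected. -/
theorem elementary_column_connected (a b ε : ℝ) (hab : a ≤ b) (hε : 0 < ε)
    (β τ : ℝ → ℝ)
    (hβ : ContinuousOn β (Icc a b)) (hτ : ContinuousOn τ (Icc a b))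
    (hle : ∀ x ∈ Icc a b, β x ≤ τ x)
    (x : ℝ) (hx : x ∈ Icc a b) (hgen : ∀ n : ℤ, x ≠ n * ε) :
    IsConnected
      (column ε {p : ℝ × ℝ | p.1 ∈ Icc a b ∧ β p.1 ≤ p.2 ∧ p.2 ≤ τ p.1} x) := by
  set S : Set (ℝ × ℝ) := {p : ℝ × ℝ | p.1 ∈ Icc a b ∧ β p.1 ≤ p.2 ∧ p.2 ≤ τ p.1} with hS
  set n : ℤ := ⌊x / ε⌋ with hn
  set K : ℤ → Set ℤ := fun i => {j : ℤ | (pixel ε i j ∩ S).Nonempty} with hK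
  have hnx : (n : ℝ) * ε ≤ x := by
    rw [hn]
    have := Int.floor_le (x / ε)
    calc (⌊x / ε⌋ : ℝ) * ε ≤ (x / ε) * ε := by nlinarith
      _ = x := div_mul_cancel₀ x hε.ne'
  have hxn1 : x ≤ ((n : ℝ) + 1) * ε := by
    rw [hn]
    have := (Int.lt_floor_add_one (x / ε)).le
    calc x = (x / ε) * ε := (div_mul_cancel₀ x hε.ne').symm
      _ ≤ ((⌊x / ε⌋ : ℝ) + 1) * ε := by nlinarith
  -- the three pieces
  set A : Set (ℝ × ℝ) := ⋃ j ∈ K (n + 1), pixel ε (n + 1) j with hA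
  set L : Set (ℝ × ℝ) :=
    ⋃ j ∈ K n, ({(n : ℝ) * ε} : Set ℝ) ×ˢ Icc (((j : ℝ) - 1) * ε) ((j : ℝ) * ε) with hL
  set R : Set (ℝ × ℝ) :=
    ⋃ j ∈ K (n + 2), ({((n : ℝ) + 1) * ε} : Set ℝ) ×ˢ Icc (((j : ℝ) - 1) * ε) ((j : ℝ) * ε)
    with hR
  -- decomposition of the column
  have hcol : column ε S x = A ∪ L ∪ R := by
    apply Subset.antisymm
    · rintro p ⟨hpix, hstrip⟩
      simp only [pixelation, mem_iUnion] at hpix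
      obtain ⟨i, j, hij, hp⟩ := hpix
      rw [mem_pixel] at hp
      simp only [mem_prod, mem_Icc, mem_univ, and_true] at hstrip
      push_cast at hstrip
      rcases lt_trichotomy i (n + 1) with hi | hi | hi
      · -- i ≤ n : p.1 = nε and i = n
        have hi' : (i : ℝ) ≤ (n : ℝ) := by exact_mod_cast Int.lt_add_one_iff.mp hi
        have hp1 : p.1 = (n : ℝ) * ε := le_antisymm (hp.1.2.trans (by nlinarith)) hstrip.1
        have hin : i = n := by
          have : (n : ℝ) ≤ (i : ℝ) := by nlinarith [hp.1.2, hp1]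
          have : (n : ℝ) = (i : ℝ) := le_antisymm this hi'
          exact_mod_cast this.symm
        left; right
        simp only [hL, mem_iUnion]
        refine ⟨j, by rw [← hin]; exact hij, ?_⟩
        simp only [mem_prod, mem_singleton_iff, mem_Icc]
        exact ⟨hp1, hp.2.1, hp.2.2⟩
      · -- i = n + 1 : full pixel
        left; left
        simp only [hA, mem_iUnion]
        refine ⟨j, by rw [← hi]; exact hij, ?_⟩
        rw [← hi, mem_pixel]
        exact hp
      · -- i ≥ n + 2 : p.1 = (n+1)ε and i = n + 2
        have hi' : ((n : ℝ) + 2) ≤ (i : ℝ) := by exact_mod_cast (by omega : n + 2 ≤ i)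
        have hp1 : p.1 = ((n : ℝ) + 1) * ε :=
          le_antisymm hstrip.2 ((by nlinarith : ((n : ℝ) + 1) * ε ≤ ((i : ℝ) - 1) * ε).trans hp.1.1)
        have hin : i = n + 2 := by
          have h1 : ((i : ℝ) - 1) * ε ≤ ((n : ℝ) + 1) * ε := hp1 ▸ hp.1.1
          have : (i : ℝ) ≤ (n : ℝ) + 2 := by nlinarith
          have : (i : ℝ) = (n : ℝ) + 2 := le_antisymm this hi'
          exact_mod_cast this
        right
        simp only [hR, mem_iUnion]
        refine ⟨j, by rw [← hin]; exact hij, ?_⟩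
        simp only [mem_prod, mem_singleton_iff, mem_Icc]
        exact ⟨hp1, hp.2.1, hp.2.2⟩
    · -- reverse inclusion
      have hstrip_mem : ∀ p : ℝ × ℝ, (n : ℝ) * ε ≤ p.1 → p.1 ≤ ((n : ℝ) + 1) * ε →
          p ∈ (Icc ((n : ℤ) * ε) (((n : ℤ) + 1 : ℤ) * ε) ×ˢ (univ : Set ℝ)) := by
        intro p h1 h2
        simp only [mem_prod, mem_Icc, mem_univ, and_true]
        push_cast
        exact ⟨h1, h2⟩
      rintro p (hp | hp) <;> [skip; skip]
      · rcases hp with hp | hp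
        · simp only [hA, mem_iUnion] at hp
          obtain ⟨j, hj, hpj⟩ := hp
          rw [mem_pixel] at hpj
          push_cast at hpj
          constructor
          · simp only [pixelation, mem_iUnion]
            exact ⟨n + 1, j, hj, by rw [mem_pixel]; push_cast; exact hpj⟩
          · exact hstrip_mem p (by linarith [hpj.1.1]) (by push_cast at hpj ⊢; linarith [hpj.1.2])
        · simp only [hL, mem_iUnion] at hp
          obtain ⟨j, hj, hpj⟩ := hp
          simp only [mem_prod, mem_singleton_iff, mem_Icc] at hpj
          constructor
          · simp only [pixelation, mem_iUnion]
            refine ⟨n, j, hj, ?_⟩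
            rw [mem_pixel]
            push_cast
            refine ⟨⟨?_, le_of_eq hpj.1⟩, hpj.2⟩
            rw [hpj.1]; nlinarith
          · exact hstrip_mem p (le_of_eq hpj.1.symm) (by rw [hpj.1]; nlinarith)
      · simp only [hR, mem_iUnion] at hp
        obtain ⟨j, hj, hpj⟩ := hp
        simp only [mem_prod, mem_singleton_iff, mem_Icc] at hpj
        constructor
        · simp only [pixelation, mem_iUnion]
          refine ⟨n + 2, j, hj, ?_⟩
          rw [mem_pixel]
          push_cast
          refine ⟨⟨le_of_eq ?_, ?_⟩, hpj.2⟩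
          · rw [hpj.1]; ring
          · rw [hpj.1]; nlinarith
        · exact hstrip_mem p (by rw [hpj.1]; nlinarith) (le_of_eq hpj.1)
  -- a convenient point of S above any x' ∈ [a,b], and its pixel index
  have hpoint : ∀ x' : ℝ, x' ∈ Icc a b → ∀ i : ℤ, ((i : ℝ) - 1) * ε ≤ x' → x' ≤ (i : ℝ) * ε →
      (⌊β x' / ε⌋ + 1) ∈ K i ∧ (x', β x') ∈ pixel ε i (⌊β x' / ε⌋ + 1) := by
    intro x' hx'ab i h1 h2
    have hβ1 : ((⌊β x' / ε⌋ : ℝ) + 1 - 1) * ε ≤ β x' := by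
      have := Int.floor_le (β x' / ε)
      calc ((⌊β x' / ε⌋ : ℝ) + 1 - 1) * ε = (⌊β x' / ε⌋ : ℝ) * ε := by ring
        _ ≤ (β x' / ε) * ε := by nlinarith
        _ = β x' := div_mul_cancel₀ _ hε.ne'
    have hβ2 : β x' ≤ ((⌊β x' / ε⌋ : ℝ) + 1) * ε := by
      have := (Int.lt_floor_add_one (β x' / ε)).le
      calc β x' = (β x' / ε) * ε := (div_mul_cancel₀ _ hε.ne').symm
        _ ≤ ((⌊β x' / ε⌋ : ℝ) + 1) * ε := by nlinarith
    have hmem : (x', β x') ∈ pixel ε i (⌊β x' / ε⌋ + 1) := by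
      rw [mem_pixel]
      push_cast
      exact ⟨⟨h1, h2⟩, hβ1, hβ2⟩
    exact ⟨⟨(x', β x'), hmem, hx'ab, le_refl _, hle _ hx'ab⟩, hmem⟩
  -- A is connected
  have hchain : ∀ (i : ℤ) (j : ℤ),
      (pixel ε i j ∩ pixel ε i (j + 1)).Nonempty := by
    intro i j
    refine ⟨(((i : ℝ)) * ε, (j : ℝ) * ε), ?_, ?_⟩ <;> (rw [mem_pixel]; push_cast) <;>
      constructor <;> constructor <;> nlinarith
  have hpixconn : ∀ i j : ℤ, IsConnected (pixel ε i j) := by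
    intro i j
    refine ⟨⟨((i : ℝ) * ε, (j : ℝ) * ε), ?_⟩, pixel_isPreconnected ε hε i j⟩
    rw [mem_pixel]
    push_cast
    constructor <;> constructor <;> nlinarith
  have hAconn : IsConnected A := by
    rw [hA]
    apply IsConnected.biUnion_of_chain
    · obtain ⟨hjK, -⟩ := hpoint x hx (n + 1) (by push_cast; nlinarith) (by push_cast; nlinarith)
      exact ⟨_, hjK⟩
    · exact Kset_ordConnected hε hβ hτ hle (n + 1)
    · exact fun j _ => hpixconn _ j
    · intro j _ _
      rw [Order.succ_eq_add_one]
      exact hchain _ j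
  -- connectedness of the left / right fringes together with A
  have hsegconn : ∀ (c : ℝ) (j : ℤ),
      IsPreconnected (({c} : Set ℝ) ×ˢ Icc (((j : ℝ) - 1) * ε) ((j : ℝ) * ε)) := by
    intro c j
    exact Convex.isPreconnected ((convex_singleton c).prod (convex_Icc _ _))
  have hsegchain : ∀ (c : ℝ) (j : ℤ),
      ((({c} : Set ℝ) ×ˢ Icc (((j : ℝ) - 1) * ε) ((j : ℝ) * ε)) ∩
        (({c} : Set ℝ) ×ˢ Icc (((((j + 1 : ℤ)) : ℝ) - 1) * ε) (((j + 1 : ℤ) : ℝ) * ε))).Nonempty := by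
    intro c j
    refine ⟨(c, (j : ℝ) * ε), ?_, ?_⟩ <;>
      simp only [mem_prod, mem_singleton_iff, mem_Icc] <;> push_cast <;>
      exact ⟨by trivial, by nlinarith, by nlinarith⟩
  -- A ∪ L is preconnected
  have hALconn : IsPreconnected (A ∪ L) := by
    rcases eq_empty_or_nonempty (K n) with hKn | hKn
    · have : L = ∅ := by simp [hL, hKn]
      rw [this, union_empty]
      exact hAconn.isPreconnected
    · -- nε ∈ [a, b]
      obtain ⟨j', hj'⟩ := hKn
      obtain ⟨p, hp, hpS⟩ := hj'
      rw [mem_pixel] at hp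
      have hnab : (n : ℝ) * ε ∈ Icc a b := by
        refine ⟨le_trans hpS.1.1 (by push_cast at hp ⊢; linarith [hp.1.2]), le_trans hnx hx.2⟩
      -- the common point q0 = (nε, β(nε))
      obtain ⟨hK1, hq1⟩ := hpoint ((n : ℝ) * ε) hnab (n + 1)
        (by push_cast; nlinarith) (by push_cast; nlinarith)
      obtain ⟨hK0, hq0⟩ := hpoint ((n : ℝ) * ε) hnab n
        (by push_cast; nlinarith) (le_refl _)
      set j0 : ℤ := ⌊β ((n : ℝ) * ε) / ε⌋ + 1 with hj0
      have hq0L : ((n : ℝ) * ε, β ((n : ℝ) * ε)) ∈ L := by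
        simp only [hL, mem_iUnion]
        refine ⟨j0, hK0, ?_⟩
        rw [mem_pixel] at hq0
        simp only [mem_prod, mem_singleton_iff, mem_Icc]
        exact ⟨by trivial, hq0.2⟩
      have hq0A : ((n : ℝ) * ε, β ((n : ℝ) * ε)) ∈ A := by
        simp only [hA, mem_iUnion]
        exact ⟨j0, hK1, hq1⟩
      have hLconn : IsPreconnected L := by
        rw [hL]
        apply IsPreconnected.biUnion_of_chain (Kset_ordConnected hε hβ hτ hle n)
        · exact fun j _ => hsegconn _ j
        · intro j _ _
          rw [Order.succ_eq_add_one]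
          exact hsegchain _ j
      exact IsPreconnected.union _ hq0A hq0L hAconn.isPreconnected hLconn
  -- (A ∪ L) ∪ R is preconnected
  have hfull : IsPreconnected (A ∪ L ∪ R) := by
    rcases eq_empty_or_nonempty (K (n + 2)) with hKn | hKn
    · have : R = ∅ := by simp [hR, hKn]
      rw [this, union_empty]
      exact hALconn
    · obtain ⟨j', hj'⟩ := hKn
      obtain ⟨p, hp, hpS⟩ := hj'
      rw [mem_pixel] at hp
      have hnab : ((n : ℝ) + 1) * ε ∈ Icc a b := by
        constructor
        · exact le_trans hx.1 hxn1
        · refine le_trans ?_ hpS.1.2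
          push_cast at hp ⊢
          linarith [hp.1.1]
      obtain ⟨hK1, hq1⟩ := hpoint (((n : ℝ) + 1) * ε) hnab (n + 1)
        (by push_cast; nlinarith) (by push_cast; nlinarith)
      obtain ⟨hK2, hq2⟩ := hpoint (((n : ℝ) + 1) * ε) hnab (n + 2)
        (by push_cast; nlinarith) (by push_cast; nlinarith)
      set j0 : ℤ := ⌊β (((n : ℝ) + 1) * ε) / ε⌋ + 1 with hj0
      have hq0R : (((n : ℝ) + 1) * ε, β (((n : ℝ) + 1) * ε)) ∈ R := by
        simp only [hR, mem_iUnion]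
        refine ⟨j0, hK2, ?_⟩
        rw [mem_pixel] at hq2
        simp only [mem_prod, mem_singleton_iff, mem_Icc]
        exact ⟨by trivial, hq2.2⟩
      have hq0AL : (((n : ℝ) + 1) * ε, β (((n : ℝ) + 1) * ε)) ∈ A ∪ L := by
        left
        simp only [hA, mem_iUnion]
        exact ⟨j0, hK1, hq1⟩
      have hRconn : IsPreconnected R := by
        rw [hR]
        apply IsPreconnected.biUnion_of_chain (Kset_ordConnected hε hβ hτ hle (n + 2))
        · exact fun j _ => hsegconn _ j
        · intro j _ _
          rw [Order.succ_eq_add_one]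
          exact hsegchain _ j
      exact IsPreconnected.union _ hq0AL hq0R hALconn hRconn
  rw [hcol]
  refine ⟨?_, hfull⟩
  obtain ⟨hjK, hq⟩ := hpoint x hx (n + 1) (by push_cast; nlinarith) (by push_cast; nlinarith)
  exact ⟨(x, β x), Or.inl (Or.inl (by simp only [hA, mem_iUnion]; exact ⟨_, hjK, hq⟩))⟩
end

section
/- Consider two half-lines from the origin in ℝ²: ℓ₀ with slope m₀ = a/b and ℓ₁ with slope m₁ = c/d, where a/b < c/d are consecutive terms of a Farey series, so bc − ad = 1. Define for each positive integer i: U_i = ⌊m₁(i−1)⌋ if m₁(i−1) ∉ ℤ, else m₁(i−1) − 1; and L_i = ⌈m₀ i⌉ if m₀ i ∉ ℤ, else m₀ i + 1; and D_i = U_i − L_i. Then D_{i+bd} = D_i + 1 for all i ≥ 1. -/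
open Set
open scoped Classical

/-- U_i: the lowest row of the unit pixelation of the half-line of slope
m₁ = c/d in the i-th column: ⌊m₁(i−1)⌋ if m₁(i−1) ∉ ℤ, and m₁(i−1) − 1
otherwise. -/
noncomputable def Ufun (c d : ℤ) (i : ℤ) : ℤ :=
  if ∃ k : ℤ, ((c : ℝ) / d) * (i - 1) = k then
    ⌊((c : ℝ) / d) * (i - 1)⌋ - 1
  else
    ⌊((c : ℝ) / d) * (i - 1)⌋

/-- L_i: the highest row of the unit pixelation of the half-line of slope
m₀ = a/b in the i-th column: ⌈m₀ i⌉ if m₀ i ∉ ℤ, and m₀ i + 1 otherwise. -/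
noncomputable def Lfun (a b : ℤ) (i : ℤ) : ℤ :=
  if ∃ k : ℤ, ((a : ℝ) / b) * i = k then
    ⌈((a : ℝ) / b) * i⌉ + 1
  else
    ⌈((a : ℝ) / b) * i⌉

/-- D_i = U_i − L_i. -/
noncomputable def Dfun (a b c d : ℤ) (i : ℤ) : ℤ :=
  Ufun c d i - Lfun a b i


lemma exists_shift (x : ℝ) (m : ℤ) : (∃ k : ℤ, x + (m:ℝ) = k) ↔ ∃ k : ℤ, x = k := by
  constructor
  · rintro ⟨k, hk⟩
    exact ⟨k - m, by push_cast; linarith⟩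
  · rintro ⟨k, hk⟩
    exact ⟨k + m, by push_cast; linarith⟩

lemma Ushift (c d : ℤ) (hd : d ≠ 0) (n i : ℤ) :
    Ufun c d (i + n * d) = Ufun c d i + n * c := by
  have key : ((c : ℝ) / d) * ((i + n * d : ℤ) - 1) = ((c : ℝ) / d) * (i - 1) + ((n * c : ℤ) : ℝ) := by
    have : (d : ℝ) ≠ 0 := Int.cast_ne_zero.mpr hd
    push_cast
    field_simp
    ring
  unfold Ufun
  rw [key, exists_shift, Int.floor_add_intCast]
  split <;> ring

lemma Lshift (a b : ℤ) (hb : b ≠ 0) (n i : ℤ) :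
    Lfun a b (i + n * b) = Lfun a b i + n * a := by
  have key : ((a : ℝ) / b) * ((i + n * b : ℤ)) = ((a : ℝ) / b) * i + ((n * a : ℤ) : ℝ) := by
    have : (b : ℝ) ≠ 0 := Int.cast_ne_zero.mpr hb
    push_cast
    field_simp
  unfold Lfun
  rw [key, exists_shift, Int.ceil_add_intCast]
  split <;> ring

/-- For consecutive Farey fractions a/b < c/d (so bc − ad = 1), one has
D_{i+bd} = D_i + 1 for every i ≥ 1. -/
theorem D_periodicity (a b c d : ℤ) (ha : 0 < a) (hb : 0 < b) (hc : 0 < c)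
    (hd : 0 < d) (hFarey : b * c - a * d = 1) :
    ∀ i : ℤ, 1 ≤ i → Dfun a b c d (i + b * d) = Dfun a b c d i + 1 := by
  intro i _
  have h1 : Ufun c d (i + b * d) = Ufun c d i + b * c := Ushift c d hd.ne' b i
  have h2 : Lfun a b (i + b * d) = Lfun a b i + d * a := by
    have := Lshift a b hb.ne' d i
    rwa [show i + d * b = i + b * d by ring] at this
  unfold Dfun
  rw [h1, h2]
  linarith
end

section
/- Let a/b < c/d be consecutive members of a Farey series (so bc − ad = 1). Define D_i = U_i − L_i as in the pixelation of the angle A(c/d, a/b), where U_i = ⌊(c/d)(i−1)⌋ (adjusted by −1 if (c/d)(i−1) ∈ ℤ) and L_i = ⌈(a/b)i⌉ (adjusted by +1 if (a/b)i ∈ ℤ). Then the smallest positive integer k₁ with D_{k₁} = 1 equals bd + bc + b + d. -/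
open Set
open scoped Classical

/-- Uniqueness of euclidean division data. -/
lemma my_ediv_emod (m d q r : ℤ) (hd : 0 < d) (h : m = d * q + r) (h0 : 0 ≤ r)
    (h1 : r < d) : m / d = q ∧ m % d = r :=
  (Int.ediv_emod_unique hd).2 ⟨by omega, h0, h1⟩

/-- Floor of an integer quotient as a real number. -/
lemma floor_int_div (m d : ℤ) (hd : 0 < d) : ⌊(m : ℝ) / (d : ℝ)⌋ = m / d := by
  obtain ⟨q, r, h, h0, h1⟩ : ∃ q r : ℤ, m = d * q + r ∧ 0 ≤ r ∧ r < d :=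
    ⟨m / d, m % d, (Int.mul_ediv_add_emod m d).symm, Int.emod_nonneg m hd.ne',
      Int.emod_lt_of_pos m hd⟩
  have hdr : (0 : ℝ) < (d : ℝ) := by exact_mod_cast hd
  have hR : (m : ℝ) = (d : ℝ) * q + r := by exact_mod_cast congrArg (Int.cast : ℤ → ℝ) h
  have h0R : (0 : ℝ) ≤ (r : ℝ) := by exact_mod_cast h0
  have h1R : (r : ℝ) < (d : ℝ) := by exact_mod_cast h1
  rw [(my_ediv_emod m d q r hd h h0 h1).1]
  apply Int.floor_eq_iff.2
  constructor
  · rw [le_div_iff₀ hdr]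
    nlinarith
  · rw [div_lt_iff₀ hdr]
    push_cast
    nlinarith

lemma exists_int_iff (m d : ℤ) (hd : 0 < d) :
    (∃ k : ℤ, (m : ℝ) / (d : ℝ) = k) ↔ d ∣ m := by
  constructor
  · rintro ⟨k, hk⟩
    refine ⟨k, ?_⟩
    have hdr : ((d : ℝ)) ≠ 0 := by exact_mod_cast hd.ne'
    field_simp at hk
    have : (m : ℝ) = ((d * k : ℤ) : ℝ) := by push_cast; linarith
    exact_mod_cast this
  · rintro ⟨k, rfl⟩
    refine ⟨k, ?_⟩
    have hdr : ((d : ℝ)) ≠ 0 := by exact_mod_cast hd.ne'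
    push_cast
    field_simp

lemma Ufun_eq (c d i : ℤ) (hd : 0 < d) : Ufun c d i = (c * (i - 1) - 1) / d := by
  have hcast : ((c : ℝ) / d) * (i - 1) = ((c * (i - 1) : ℤ) : ℝ) / (d : ℝ) := by
    push_cast; ring
  set m : ℤ := c * (i - 1) with hm
  rw [Ufun, hcast]
  by_cases hdvd : d ∣ m
  · rw [if_pos ((exists_int_iff m d hd).2 hdvd), floor_int_div m d hd]
    obtain ⟨t, ht⟩ := hdvd
    have h1 : m / d = t := by rw [ht, Int.mul_ediv_cancel_left t hd.ne']
    have h2 : (m - 1) / d = t - 1 :=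
      (my_ediv_emod _ d (t - 1) (d - 1) hd (by rw [ht]; ring) (by omega) (by omega)).1
    omega
  · rw [if_neg fun h => hdvd ((exists_int_iff m d hd).1 h), floor_int_div m d hd]
    have hr0 : 0 ≤ m % d := Int.emod_nonneg m hd.ne'
    have hr1 : m % d < d := Int.emod_lt_of_pos m hd
    have hrne : m % d ≠ 0 := fun h => hdvd (Int.dvd_of_emod_eq_zero h)
    have h := Int.mul_ediv_add_emod m d
    have h2 : (m - 1) / d = m / d :=
      (my_ediv_emod _ d (m / d) (m % d - 1) hd (by omega) (by omega) (by omega)).1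
    omega

lemma ceil_int_div (n b : ℤ) (hb : 0 < b) (hnd : ¬ b ∣ n) :
    ⌈(n : ℝ) / (b : ℝ)⌉ = n / b + 1 := by
  have hfl := floor_int_div n b hb
  have hx : ((n / b : ℤ) : ℝ) ≠ (n : ℝ) / (b : ℝ) := by
    intro h
    exact hnd ((exists_int_iff n b hb).1 ⟨n / b, h.symm⟩)
  have h1 : (((n / b : ℤ)) : ℝ) < (n : ℝ) / (b : ℝ) := by
    rcases lt_of_le_of_ne (by rw [← hfl]; exact Int.floor_le _) hx with h
    exact h
  have h2 : ⌈(n : ℝ) / (b : ℝ)⌉ ≤ n / b + 1 := by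
    have := Int.ceil_le_floor_add_one ((n : ℝ) / (b : ℝ))
    omega
  have h3 : n / b + 1 ≤ ⌈(n : ℝ) / (b : ℝ)⌉ := by
    have hle : ((n / b : ℤ) : ℝ) < ((⌈(n : ℝ) / (b : ℝ)⌉ : ℤ) : ℝ) :=
      lt_of_lt_of_le h1 (Int.le_ceil _)
    exact_mod_cast Int.add_one_le_of_lt (by exact_mod_cast hle)
  omega

lemma Lfun_eq (a b i : ℤ) (hb : 0 < b) : Lfun a b i = a * i / b + 1 := by
  have hcast : ((a : ℝ) / b) * i = ((a * i : ℤ) : ℝ) / (b : ℝ) := by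
    push_cast; ring
  set n : ℤ := a * i with hn
  rw [Lfun, hcast]
  by_cases hdvd : b ∣ n
  · rw [if_pos ((exists_int_iff n b hb).2 hdvd)]
    obtain ⟨t, ht⟩ := hdvd
    have h1 : n / b = t := by rw [ht, Int.mul_ediv_cancel_left t hb.ne']
    have h2 : ((n : ℤ) : ℝ) / (b : ℝ) = (t : ℝ) := by
      have hb0 : ((b : ℝ)) ≠ 0 := by exact_mod_cast hb.ne'
      rw [ht]
      push_cast
      field_simp
    rw [h2, Int.ceil_intCast]
    omega
  · rw [if_neg fun h => hdvd ((exists_int_iff n b hb).1 h)]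
    exact ceil_int_div n b hb hdvd

lemma Dfun_eq (a b c d i : ℤ) (hb : 0 < b) (hd : 0 < d) :
    Dfun a b c d i = (c * (i - 1) - 1) / d - a * i / b - 1 := by
  rw [Dfun, Ufun_eq c d i hd, Lfun_eq a b i hb]
  ring

/-- For consecutive Farey fractions a/b < c/d ≤ 1 (in lowest terms, with
bc − ad = 1), the smallest positive index i with D_i = 1 is
k₁ = bd + bc + b + d. -/
theorem first_touch_index (a b c d : ℤ) (ha : 0 < a) (hb : 0 < b) (hc : 0 < c)
    (hd : 0 < d)
    (hab : Int.gcd a b = 1) (hcd : Int.gcd c d = 1)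
    (hlt : (a : ℝ) / b < (c : ℝ) / d) (hle1 : (c : ℝ) / d ≤ 1)
    (hFarey : b * c - a * d = 1) :
    IsLeast {i : ℤ | 1 ≤ i ∧ Dfun a b c d i = 1} (b * d + b * c + b + d) := by
  constructor
  · constructor
    · nlinarith
    · set K : ℤ := b * d + b * c + b + d with hK
      rw [Dfun_eq a b c d K hb hd]
      have h1 : (c * (K - 1) - 1) / d = c * b + a * c + c + a :=
        (my_ediv_emod _ d (c * b + a * c + c + a) 0 hd
          (by rw [hK]; linear_combination (c + 1) * hFarey) le_rfl hd).1
      have h2 : a * K / b = a * d + a * c + a + c - 1 :=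
        (my_ediv_emod _ b (a * d + a * c + a + c - 1) (b - 1) hb
          (by rw [hK]; linear_combination -hFarey) (by omega) (by omega)).1
      rw [h1, h2]
      linarith
  · rintro i ⟨hi1, hDi⟩
    rw [Dfun_eq a b c d i hb hd] at hDi
    set m : ℤ := c * (i - 1) - 1 with hm
    set n : ℤ := a * i with hn
    have hmd := Int.mul_ediv_add_emod m d
    have hnb := Int.mul_ediv_add_emod n b
    have hr1 : 0 ≤ m % d := Int.emod_nonneg m hd.ne'
    have hr2 : n % b < b := Int.emod_lt_of_pos n hb
    have hr2' : 0 ≤ n % b := Int.emod_nonneg n hb.ne'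
    -- b*m - d*n = i*(b*c - a*d) - b*c - b = i - b*c - b
    have key : b * m - d * n = i - b * c - b := by
      rw [hm, hn]; nlinarith
    -- From hDi : m / d - n / b - 1 = 1
    have hq : m / d = n / b + 2 := by omega
    have expand : b * m - d * n
        = b * d * (m / d - n / b) + b * (m % d) - d * (n % b) := by
      nlinarith [hmd, hnb]
    have hbr : 0 ≤ b * (m % d) := mul_nonneg hb.le hr1
    have hdr : d * (n % b) ≤ d * (b - 1) :=
      mul_le_mul_of_nonneg_left (by omega) hd.le
    have hqq : b * d * (m / d - n / b) = 2 * (b * d) := by rw [hq]; ring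
    nlinarith [key, expand, hbr, hdr, hqq]
end

section
/- For every positive integer n, the ε-pixelation of the angle A(1/2, n/(2n+1)) — the union of the two half-lines from the origin with slopes 1/2 and n/(2n+1) (x ≥ 0) — contains exactly 2n holes; that is, the first homology of P_ε(A(1/2, n/(2n+1))) has rank 2n, independently of ε > 0. -/
open Set

/-- The angle A(β,α) with slopes α < β: the union of the two half-lines from
the origin with slopes α and β over x ≥ 0. -/
def angle (β α : ℝ) : Set (ℝ × ℝ) :=
  {p : ℝ × ℝ | 0 ≤ p.1 ∧ (p.2 - α * p.1) * (p.2 - β * p.1) = 0}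

/-- A hole of a planar set X is a bounded connected component of its
complement. -/
def holes (X : Set (ℝ × ℝ)) : Set (Set (ℝ × ℝ)) :=
  {C | (∃ x ∈ Xᶜ, C = connectedComponentIn Xᶜ x) ∧ Bornology.IsBounded C}

set_option maxHeartbeats 1000000
open Bornology

namespace FA

variable (n : ℕ)

/-- divisor -/
def D : ℤ := 2*(n:ℤ)+1
/-- top row of lower staircase in column i -/
def tt (i : ℤ) : ℤ := ((n:ℤ)*i) / (D n) + 1
/-- bottom row of lower staircase in column i -/
def aa (i : ℤ) : ℤ := ((n:ℤ)*(i-1) + 2*(n:ℤ)) / (D n)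
/-- bottom row of upper staircase in column i (top is cc+1) -/
def cc (i : ℤ) : ℤ := i / 2

lemma D_pos : 0 < D n := by unfold D; omega

lemma tt_spec (i : ℤ) : D n * (tt n i - 1) ≤ (n:ℤ)*i ∧ (n:ℤ)*i < D n * (tt n i) := by
  have h1 := Int.mul_ediv_add_emod ((n:ℤ)*i) (D n)
  have h2 := Int.emod_nonneg ((n:ℤ)*i) (by have := D_pos n; omega : D n ≠ 0)
  have h3 := Int.emod_lt_of_pos ((n:ℤ)*i) (D_pos n)
  unfold tt; constructor <;> nlinarith [D_pos n]

lemma aa_spec (i : ℤ) : D n * (aa n i - 1) < (n:ℤ)*(i-1) ∧ (n:ℤ)*(i-1) ≤ D n * (aa n i) := by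
  have h1 := Int.mul_ediv_add_emod ((n:ℤ)*(i-1) + 2*(n:ℤ)) (D n)
  have h2 := Int.emod_nonneg ((n:ℤ)*(i-1) + 2*(n:ℤ)) (by have := D_pos n; omega : D n ≠ 0)
  have h3 := Int.emod_lt_of_pos ((n:ℤ)*(i-1) + 2*(n:ℤ)) (D_pos n)
  unfold aa D at *; constructor <;> nlinarith

lemma cc_spec (i : ℤ) : 2 * cc i ≤ i ∧ i < 2 * cc i + 2 := by
  have h1 := Int.mul_ediv_add_emod i 2
  have h2 := Int.emod_nonneg i (by omega : (2:ℤ) ≠ 0)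
  have h3 := Int.emod_lt_of_pos i (by omega : (0:ℤ) < 2)
  unfold cc; omega

/-- Block predicate: pixel (i,j) meets the angle. -/
def Blk (i j : ℤ) : Prop :=
  (1 ≤ i ∧ ((aa n i ≤ j ∧ j ≤ tt n i) ∨ (cc i ≤ j ∧ j ≤ cc i + 1))) ∨
  (i = 0 ∧ (j = 0 ∨ j = 1))

variable {ε : ℝ}

lemma mem_pixel {i j : ℤ} {p : ℝ × ℝ} :
    p ∈ pixel ε i j ↔ ((i:ℝ)-1)*ε ≤ p.1 ∧ p.1 ≤ i*ε ∧ ((j:ℝ)-1)*ε ≤ p.2 ∧ p.2 ≤ j*ε := by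
  simp only [pixel, Set.mem_prod, Set.mem_Icc]
  push_cast
  tauto

variable (hn : 0 < n) (hε : 0 < ε)
include hn hε

lemma blk_iff (i j : ℤ) :
    (pixel ε i j ∩ angle (1/2) ((n:ℝ)/(2*n+1))).Nonempty ↔ Blk n i j := by
  have hD : (0:ℝ) < 2*(n:ℝ)+1 := by positivity
  have hnR : (0:ℝ) < (n:ℝ) := by exact_mod_cast hn
  have hDZ : (0:ℤ) < 2*(n:ℤ)+1 := by positivity
  constructor
  · rintro ⟨p, hp, hx, hl⟩
    rw [mem_pixel] at hp
    obtain ⟨h1, h2, h3, h4⟩ := hp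
    have hi0 : 0 ≤ i := by
      by_contra hc
      push_neg at hc
      have : (i:ℝ) * ε < 0 := by
        apply mul_neg_of_neg_of_pos _ hε
        exact_mod_cast hc
      linarith
    rcases eq_or_lt_of_le hi0 with hi | hi
    · -- i = 0 : p.1 = 0, p.2 = 0
      have hx0 : p.1 = 0 := by
        have : (i:ℝ) * ε = 0 := by rw [← hi]; simp
        linarith
      have hy0 : p.2 = 0 := by
        rcases mul_eq_zero.1 hl with h5 | h5 <;> · rw [hx0] at h5; linarith
      right
      refine ⟨hi.symm, ?_⟩
      rw [hx0] at h1 h2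
      rw [hy0] at h3 h4
      have hj1 : ((j:ℝ) - 1) ≤ 0 := by nlinarith
      have hj2 : (0:ℝ) ≤ (j:ℝ) := by nlinarith
      have hj1' : j ≤ 1 := by exact_mod_cast (by linarith : (j:ℝ) ≤ 1)
      have hj2' : (0:ℤ) ≤ j := by exact_mod_cast hj2
      omega
    · -- 1 ≤ i
      have hi1 : 1 ≤ i := hi
      left
      refine ⟨hi1, ?_⟩
      rcases mul_eq_zero.1 hl with h5 | h5
      · -- slope n/(2n+1)
        left
        have hy : p.2 = (n:ℝ)/(2*n+1) * p.1 := by linarith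
        have hα : (0:ℝ) ≤ (n:ℝ)/(2*n+1) := by positivity
        have k1 : ((j:ℝ)-1) * ε ≤ ((n:ℝ)/(2*n+1) * i) * ε := by
          have := mul_le_mul_of_nonneg_left h2 hα
          rw [← hy] at this
          calc ((j:ℝ)-1) * ε ≤ p.2 := h3
            _ ≤ (n:ℝ)/(2*n+1) * (i * ε) := this
            _ = ((n:ℝ)/(2*n+1) * i) * ε := by ring
        have k1' : ((j:ℝ)-1) ≤ (n:ℝ)/(2*n+1) * i := le_of_mul_le_mul_right k1 hε
        have k1'' : ((2:ℝ)*n+1) * ((j:ℝ)-1) ≤ (n:ℝ) * i := by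
          rw [div_mul_eq_mul_div, le_div_iff₀ hD] at k1'
          linarith
        have K1 : (2*(n:ℤ)+1) * (j-1) ≤ (n:ℤ) * i := by exact_mod_cast k1''
        have k2 : ((n:ℝ)/(2*n+1) * (i-1)) * ε ≤ (j:ℝ) * ε := by
          have := mul_le_mul_of_nonneg_left h1 hα
          rw [← hy] at this
          calc ((n:ℝ)/(2*n+1) * (i-1)) * ε = (n:ℝ)/(2*n+1) * ((i-1) * ε) := by ring
            _ ≤ p.2 := this
            _ ≤ (j:ℝ) * ε := h4
        have k2' : (n:ℝ)/(2*n+1) * ((i:ℝ)-1) ≤ (j:ℝ) := le_of_mul_le_mul_right k2 hε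
        have k2'' : (n:ℝ) * ((i:ℝ)-1) ≤ ((2:ℝ)*n+1) * j := by
          rw [div_mul_eq_mul_div, div_le_iff₀ hD] at k2'
          linarith
        have K2 : (n:ℤ) * (i-1) ≤ (2*(n:ℤ)+1) * j := by exact_mod_cast k2''
        obtain ⟨ts1, ts2⟩ := tt_spec n i
        obtain ⟨as1, as2⟩ := aa_spec n i
        unfold D at ts1 ts2 as1 as2
        constructor
        · -- aa ≤ j
          have hlt : (2*(n:ℤ)+1) * (aa n i - 1) < (2*(n:ℤ)+1) * j := by linarith
          have := lt_of_mul_lt_mul_left hlt (by positivity)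
          omega
        · -- j ≤ tt
          have hlt : (2*(n:ℤ)+1) * (j - 1) < (2*(n:ℤ)+1) * (tt n i) := by linarith
          have := lt_of_mul_lt_mul_left hlt (by positivity)
          omega
      · -- slope 1/2
        right
        have hy : p.2 = 1/2 * p.1 := by linarith
        have k1 : ((j:ℝ)-1) * ε ≤ (1/2 * i) * ε := by
          calc ((j:ℝ)-1) * ε ≤ p.2 := h3
            _ = 1/2 * p.1 := hy
            _ ≤ (1/2 * i) * ε := by nlinarith
        have k1' : ((j:ℝ)-1) ≤ 1/2 * i := le_of_mul_le_mul_right k1 hε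
        have K1 : 2 * (j-1) ≤ i := by
          exact_mod_cast (by linarith : (2:ℝ) * ((j:ℝ)-1) ≤ (i:ℝ))
        have k2 : (1/2 * ((i:ℝ)-1)) * ε ≤ (j:ℝ) * ε := by
          calc (1/2 * ((i:ℝ)-1)) * ε ≤ 1/2 * p.1 := by nlinarith
            _ = p.2 := hy.symm
            _ ≤ (j:ℝ) * ε := h4
        have k2' : 1/2 * ((i:ℝ)-1) ≤ (j:ℝ) := le_of_mul_le_mul_right k2 hε
        have K2 : i - 1 ≤ 2 * j := by
          exact_mod_cast (by linarith : (i:ℝ) - 1 ≤ 2 * (j:ℝ))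
        obtain ⟨cs1, cs2⟩ := cc_spec i
        omega
  · intro hB
    rcases hB with ⟨hi1, hb⟩ | ⟨hi0, hj⟩
    · have hi1' : (1:ℝ) ≤ (i:ℝ) := by exact_mod_cast hi1
      rcases hb with ⟨hj1, hj2⟩ | ⟨hj1, hj2⟩
      · -- lower line
        obtain ⟨ts1, ts2⟩ := tt_spec n i
        obtain ⟨as1, as2⟩ := aa_spec n i
        unfold D at ts1 ts2 as1 as2
        have K1 : (2*(n:ℤ)+1) * (j-1) ≤ (n:ℤ) * i := by
          have h := mul_le_mul_of_nonneg_left (by omega : j - 1 ≤ tt n i - 1)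
            (by positivity : (0:ℤ) ≤ 2*(n:ℤ)+1)
          linarith
        have K2 : (n:ℤ) * (i-1) ≤ (2*(n:ℤ)+1) * j := by
          have h := mul_le_mul_of_nonneg_left (by omega : aa n i ≤ j)
            (by positivity : (0:ℤ) ≤ 2*(n:ℤ)+1)
          linarith
        have K1' : ((2:ℝ)*n+1) * ((j:ℝ)-1) ≤ (n:ℝ) * i := by exact_mod_cast K1
        have K2' : (n:ℝ) * ((i:ℝ)-1) ≤ ((2:ℝ)*n+1) * (j:ℝ) := by exact_mod_cast K2
        have hξ1 : (i:ℝ)-1 ≤ max ((i:ℝ)-1) (((j:ℝ)-1)*(2*n+1)/n) := le_max_left _ _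
        have hξ2 : max ((i:ℝ)-1) (((j:ℝ)-1)*(2*n+1)/n) ≤ (i:ℝ) := by
          apply max_le (by linarith)
          rw [div_le_iff₀ hnR]
          nlinarith
        have hv1 : ((j:ℝ)-1) ≤ (n:ℝ)/(2*n+1) * (max ((i:ℝ)-1) (((j:ℝ)-1)*(2*n+1)/n)) := by
          have he : (n:ℝ)/(2*n+1) * (((j:ℝ)-1)*(2*n+1)/n) = (j:ℝ)-1 := by field_simp
          calc ((j:ℝ)-1) = (n:ℝ)/(2*n+1) * (((j:ℝ)-1)*(2*n+1)/n) := he.symm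
            _ ≤ _ := mul_le_mul_of_nonneg_left (le_max_right _ _) (by positivity)
        have hv2 : (n:ℝ)/(2*n+1) * (max ((i:ℝ)-1) (((j:ℝ)-1)*(2*n+1)/n)) ≤ (j:ℝ) := by
          rcases max_cases ((i:ℝ)-1) (((j:ℝ)-1)*(2*n+1)/n) with ⟨hm, _⟩ | ⟨hm, _⟩ <;> rw [hm]
          · rw [div_mul_eq_mul_div, div_le_iff₀ hD]
            nlinarith
          · have he : (n:ℝ)/(2*n+1) * (((j:ℝ)-1)*(2*n+1)/n) = (j:ℝ)-1 := by field_simp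
            rw [he]; linarith
        set ξ : ℝ := max ((i:ℝ)-1) (((j:ℝ)-1)*(2*n+1)/n) with hxi
        have m1 : ((i:ℝ)-1)*ε ≤ ξ*ε := mul_le_mul_of_nonneg_right hξ1 hε.le
        have m2 : ξ*ε ≤ (i:ℝ)*ε := mul_le_mul_of_nonneg_right hξ2 hε.le
        have m3 : ((j:ℝ)-1)*ε ≤ (n:ℝ)/(2*n+1) * (ξ*ε) := by
          have := mul_le_mul_of_nonneg_right hv1 hε.le
          calc ((j:ℝ)-1)*ε ≤ ((n:ℝ)/(2*n+1) * ξ)*ε := this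
            _ = (n:ℝ)/(2*n+1) * (ξ*ε) := by ring
        have m4 : (n:ℝ)/(2*n+1) * (ξ*ε) ≤ (j:ℝ)*ε := by
          have := mul_le_mul_of_nonneg_right hv2 hε.le
          calc (n:ℝ)/(2*n+1) * (ξ*ε) = ((n:ℝ)/(2*n+1) * ξ)*ε := by ring
            _ ≤ (j:ℝ)*ε := this
        refine ⟨(ξ*ε, (n:ℝ)/(2*n+1) * (ξ*ε)), mem_pixel.mpr ⟨m1, m2, m3, m4⟩, ?_, ?_⟩
        · show (0:ℝ) ≤ ξ*ε
          exact mul_nonneg (le_trans (by linarith) hξ1) hε.le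
        · show ((n:ℝ)/(2*n+1) * (ξ*ε) - (n:ℝ)/(2*n+1) * (ξ*ε)) * _ = 0
          ring
      · -- upper line
        obtain ⟨cs1, cs2⟩ := cc_spec i
        have K1 : 2*(j-1) ≤ i := by omega
        have K2 : i - 1 ≤ 2*j := by omega
        have K1' : (2:ℝ) * ((j:ℝ)-1) ≤ (i:ℝ) := by exact_mod_cast K1
        have K2' : (i:ℝ) - 1 ≤ 2 * (j:ℝ) := by exact_mod_cast K2
        have hξ1 : (i:ℝ)-1 ≤ max ((i:ℝ)-1) (((j:ℝ)-1)*2) := le_max_left _ _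
        have hξ2 : max ((i:ℝ)-1) (((j:ℝ)-1)*2) ≤ (i:ℝ) := max_le (by linarith) (by linarith)
        have hv1 : ((j:ℝ)-1) ≤ 1/2 * (max ((i:ℝ)-1) (((j:ℝ)-1)*2)) := by
          have := le_max_right ((i:ℝ)-1) (((j:ℝ)-1)*2)
          linarith
        have hv2 : 1/2 * (max ((i:ℝ)-1) (((j:ℝ)-1)*2)) ≤ (j:ℝ) := by
          rcases max_cases ((i:ℝ)-1) (((j:ℝ)-1)*2) with ⟨hm, _⟩ | ⟨hm, _⟩ <;> rw [hm] <;> linarith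
        set ξ : ℝ := max ((i:ℝ)-1) (((j:ℝ)-1)*2) with hxi
        have m1 : ((i:ℝ)-1)*ε ≤ ξ*ε := mul_le_mul_of_nonneg_right hξ1 hε.le
        have m2 : ξ*ε ≤ (i:ℝ)*ε := mul_le_mul_of_nonneg_right hξ2 hε.le
        have m3 : ((j:ℝ)-1)*ε ≤ 1/2 * (ξ*ε) := by
          calc ((j:ℝ)-1)*ε ≤ (1/2 * ξ)*ε := mul_le_mul_of_nonneg_right hv1 hε.le
            _ = 1/2 * (ξ*ε) := by ring
        have m4 : 1/2 * (ξ*ε) ≤ (j:ℝ)*ε := by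
          calc 1/2 * (ξ*ε) = (1/2 * ξ)*ε := by ring
            _ ≤ (j:ℝ)*ε := mul_le_mul_of_nonneg_right hv2 hε.le
        refine ⟨(ξ*ε, 1/2 * (ξ*ε)), mem_pixel.mpr ⟨m1, m2, m3, m4⟩, ?_, ?_⟩
        · show (0:ℝ) ≤ ξ*ε
          exact mul_nonneg (le_trans (by linarith) hξ1) hε.le
        · show (_ : ℝ) * (1/2 * (ξ*ε) - 1/2 * (ξ*ε)) = 0
          ring
    · -- i = 0 : point (0,0)
      subst hi0
      have hp : ((0,0) : ℝ×ℝ) ∈ pixel ε 0 j := by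
        apply mem_pixel.mpr
        push_cast
        rcases hj with rfl | rfl <;>
          exact ⟨by push_cast; nlinarith, by push_cast; nlinarith,
                 by push_cast; nlinarith, by push_cast; nlinarith⟩
      exact ⟨(0,0), hp, le_refl _, by norm_num⟩

lemma X_eq :
    pixelation ε (angle (1/2) ((n:ℝ)/(2*n+1))) = ⋃ (i:ℤ) (j:ℤ) (_ : Blk n i j), pixel ε i j := by
  unfold pixelation
  ext p
  simp only [mem_iUnion, exists_prop]
  constructor
  · rintro ⟨i, j, h1, h2⟩; exact ⟨i, j, (blk_iff n hn hε i j).1 h1, h2⟩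
  · rintro ⟨i, j, h1, h2⟩; exact ⟨i, j, (blk_iff n hn hε i j).2 h1, h2⟩

lemma mem_compl_X_iff {p : ℝ × ℝ} :
    p ∈ (pixelation ε (angle (1/2) ((n:ℝ)/(2*n+1))))ᶜ ↔
      ∀ i j : ℤ, Blk n i j → p ∉ pixel ε i j := by
  rw [Set.mem_compl_iff, X_eq n hn hε]
  simp only [mem_iUnion, exists_prop, not_exists, not_and]

end FA


namespace FA

section structural
variable {n : ℕ}

lemma mul_lt_cancel {a b : ℤ} (h : D n * a < D n * b) : a < b :=
  lt_of_mul_lt_mul_left h (D_pos n).le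

lemma aa_le_tt (i : ℤ) : aa n i ≤ tt n i := by
  obtain ⟨a1, a2⟩ := aa_spec n i
  obtain ⟨t1, t2⟩ := tt_spec n i
  have hni : (n:ℤ)*(i-1) ≤ (n:ℤ)*i := by nlinarith [Int.natCast_nonneg n]
  have := mul_lt_cancel (n := n) (by linarith : D n * (aa n i - 1) < D n * (tt n i))
  omega

lemma tt_mono (i : ℤ) : tt n i ≤ tt n (i+1) := by
  obtain ⟨t1, t2⟩ := tt_spec n i
  obtain ⟨s1, s2⟩ := tt_spec n (i+1)
  have hni : (n:ℤ)*i ≤ (n:ℤ)*(i+1) := by nlinarith [Int.natCast_nonneg n]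
  have := mul_lt_cancel (n := n) (by linarith : D n * (tt n i - 1) < D n * (tt n (i+1)))
  omega

lemma tt_step (i : ℤ) : tt n (i+1) ≤ tt n i + 1 := by
  obtain ⟨t1, t2⟩ := tt_spec n i
  obtain ⟨s1, s2⟩ := tt_spec n (i+1)
  have hni : (n:ℤ)*(i+1) ≤ (n:ℤ)*i + D n := by unfold D; nlinarith [Int.natCast_nonneg n]
  have := mul_lt_cancel (n := n) (by linarith : D n * (tt n (i+1) - 1) < D n * (tt n i + 1))
  omega

lemma aa_succ_le_tt (i : ℤ) : aa n (i+1) ≤ tt n i := by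
  obtain ⟨a1, a2⟩ := aa_spec n (i+1)
  obtain ⟨t1, t2⟩ := tt_spec n i
  have : (i+1) - 1 = i := by ring
  rw [this] at a1
  have := mul_lt_cancel (n := n) (by linarith : D n * (aa n (i+1) - 1) < D n * (tt n i))
  omega

lemma cc_nonneg {i : ℤ} (hi : 1 ≤ i) : 0 ≤ cc i := by
  obtain ⟨c1, c2⟩ := cc_spec i; omega

lemma cc_mono (i : ℤ) : cc i ≤ cc (i+1) := by
  obtain ⟨c1, c2⟩ := cc_spec i; obtain ⟨d1, d2⟩ := cc_spec (i+1); omega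

lemma cc_step (i : ℤ) : cc (i+1) ≤ cc i + 1 := by
  obtain ⟨c1, c2⟩ := cc_spec i; obtain ⟨d1, d2⟩ := cc_spec (i+1); omega

lemma tt_le_cc_succ {i : ℤ} (hi : 1 ≤ i) : tt n i ≤ cc i + 1 := by
  obtain ⟨t1, t2⟩ := tt_spec n i
  obtain ⟨c1, c2⟩ := cc_spec i
  have hcc : 0 ≤ cc i := by omega
  by_contra hc
  push_neg at hc
  have h1 : D n * (cc i + 1) ≤ D n * (tt n i - 1) := by
    apply mul_le_mul_of_nonneg_left _ (D_pos n).le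
    omega
  have h2 : (n:ℤ) * i ≤ (n:ℤ) * (2 * cc i + 1) := by
    apply mul_le_mul_of_nonneg_left _ (Int.natCast_nonneg n)
    omega
  unfold D at h1 t1 t2
  nlinarith [Int.natCast_nonneg n]

lemma aa_le_cc {i : ℤ} (hi : 1 ≤ i) : aa n i ≤ cc i := by
  obtain ⟨a1, a2⟩ := aa_spec n i
  obtain ⟨c1, c2⟩ := cc_spec i
  have hcc : 0 ≤ cc i := by omega
  by_contra hc
  push_neg at hc
  have h1 : D n * (cc i) ≤ D n * (aa n i - 1) := by
    apply mul_le_mul_of_nonneg_left _ (D_pos n).le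
    omega
  have h2 : (n:ℤ) * (i - 1) ≤ (n:ℤ) * (2 * cc i) := by
    apply mul_le_mul_of_nonneg_left _ (Int.natCast_nonneg n)
    omega
  unfold D at h1 a1 a2
  nlinarith [Int.natCast_nonneg n]

lemma aa_nonneg {i : ℤ} (hi : 1 ≤ i) : 0 ≤ aa n i := by
  obtain ⟨a1, a2⟩ := aa_spec n i
  by_contra hc
  push_neg at hc
  have h1 : D n * (aa n i) ≤ D n * (-1) := by
    apply mul_le_mul_of_nonneg_left _ (D_pos n).le
    omega
  have h2 : 0 ≤ (n:ℤ) * (i-1) := by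
    apply mul_nonneg (Int.natCast_nonneg n); omega
  have := D_pos n
  nlinarith

lemma blk_j_nonneg {i j : ℤ} (hb : Blk n i j) : 0 ≤ j := by
  rcases hb with ⟨hi, ⟨h1, _⟩ | ⟨h1, _⟩⟩ | ⟨_, hj⟩
  · have := aa_nonneg (n := n) hi; omega
  · have := cc_nonneg hi; omega
  · omega

lemma tt_eq {i q : ℤ} (h1 : D n * q ≤ (n:ℤ)*i) (h2 : (n:ℤ)*i < D n * (q+1)) : tt n i = q + 1 := by
  obtain ⟨t1, t2⟩ := tt_spec n i
  have e1 := mul_lt_cancel (n := n) (by linarith : D n * q < D n * (tt n i))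
  have e2 := mul_lt_cancel (n := n) (by linarith : D n * (tt n i - 1) < D n * (q+1))
  omega

lemma cc_eq {i q : ℤ} (h1 : 2*q ≤ i) (h2 : i < 2*q+2) : cc i = q := by
  obtain ⟨c1, c2⟩ := cc_spec i; omega

/-- channel arithmetic: for i ≥ 12n+6 the pinch between columns i and i+1 is open -/
lemma chan_arith {i : ℤ} (hi : 12*(n:ℤ)+6 ≤ i) : tt n (i+1) ≤ cc i - 2 := by
  obtain ⟨t1, t2⟩ := tt_spec n (i+1)
  obtain ⟨c1, c2⟩ := cc_spec i
  have hcc : 6*(n:ℤ)+3 ≤ cc i := by omega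
  have h2 : (n:ℤ) * (i+1) ≤ (n:ℤ) * (2*cc i + 2) := by
    apply mul_le_mul_of_nonneg_left _ (Int.natCast_nonneg n)
    omega
  have key : (n:ℤ) * (i+1) < D n * (cc i - 2) := by
    unfold D; nlinarith [Int.natCast_nonneg n]
  have := mul_lt_cancel (n := n) (by linarith : D n * (tt n (i+1) - 1) < D n * (cc i - 2))
  omega

end structural

section topo

/-- an open connected subset of Ω that is relatively closed is a connected component -/
lemma comp_eq_of_clopen {Ω V : Set (ℝ×ℝ)} (hV : IsOpen V) (hVc : IsPreconnected V)
    (hsub : V ⊆ Ω) (hcl : ∀ q ∈ closure V, q ∈ Ω → q ∈ V) {x : ℝ×ℝ} (hx : x ∈ V) :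
    connectedComponentIn Ω x = V := by
  apply Subset.antisymm _ (IsPreconnected.subset_connectedComponentIn hVc hx hsub)
  have hxΩ : x ∈ Ω := hsub hx
  have hsub2 : connectedComponentIn Ω x ⊆ V ∪ (closure V)ᶜ := by
    intro q hq
    by_cases h : q ∈ closure V
    · exact Or.inl (hcl q h (connectedComponentIn_subset Ω x hq))
    · exact Or.inr h
  have hdisj : Disjoint V (closure V)ᶜ :=
    Set.disjoint_compl_right_iff_subset.mpr subset_closure
  have hne : (connectedComponentIn Ω x ∩ V).Nonempty :=
    ⟨x, mem_connectedComponentIn hxΩ, hx⟩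
  exact IsPreconnected.subset_left_of_subset_union hV (isClosed_closure.isOpen_compl)
    hdisj hsub2 hne (isPreconnected_connectedComponentIn)

lemma unbounded_of_norm {T : Set (ℝ×ℝ)} (h : ∀ r : ℝ, ∃ p ∈ T, r ≤ ‖p‖) :
    ¬ IsBounded T := by
  intro hb
  obtain ⟨r, hr⟩ := (Metric.isBounded_iff_subset_closedBall 0).1 hb
  obtain ⟨p, hp, hrp⟩ := h (r+1)
  have := hr hp
  rw [Metric.mem_closedBall, dist_zero_right] at this
  linarith

lemma comp_unbounded {Ω T : Set (ℝ×ℝ)} {x : ℝ×ℝ} (hT : IsPreconnected T)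
    (hsub : T ⊆ Ω) (hx : x ∈ T) (hub : ¬ IsBounded T) :
    ¬ IsBounded (connectedComponentIn Ω x) := by
  intro hb
  exact hub (hb.subset (IsPreconnected.subset_connectedComponentIn hT hx hsub))

end topo

section holes

lemma between_int {ε : ℝ} (hε : 0 < ε) {i a b : ℤ} {x : ℝ}
    (h1 : ((i:ℝ)-1)*ε ≤ x) (h2 : x ≤ (i:ℝ)*ε)
    (h3 : ((a:ℝ))*ε < x) (h4 : x < ((b:ℝ))*ε) : a < i ∧ i ≤ b := by
  have l1 : (a:ℝ) < (i:ℝ) := lt_of_mul_lt_mul_right (by linarith : (a:ℝ)*ε < (i:ℝ)*ε) hε.le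
  have l2 : ((i:ℝ)-1) < (b:ℝ) := lt_of_mul_lt_mul_right (by linarith) hε.le
  constructor
  · exact_mod_cast l1
  · have : (i:ℝ) < (b:ℝ)+1 := by linarith
    have : i < b + 1 := by exact_mod_cast this
    omega

variable {n : ℕ}

lemma tt_even_band {m : ℤ} (h1 : 4*(n:ℤ)+3 ≤ m) (h2 : m ≤ 6*(n:ℤ)+3) : tt n (2*m) = m - 2 := by
  have h := tt_eq (n := n) (i := 2*m) (q := m - 3) ?_ ?_
  · omega
  · unfold D; nlinarith [Int.natCast_nonneg n]
  · unfold D; nlinarith [Int.natCast_nonneg n]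

lemma tt_odd_lo {k : ℤ} (h0 : 0 ≤ k) (h1 : k ≤ (n:ℤ)) : tt n (8*(n:ℤ)+5+2*k) = 4*(n:ℤ)+1+k := by
  have h := tt_eq (n := n) (i := 8*(n:ℤ)+5+2*k) (q := 4*(n:ℤ)+k) ?_ ?_
  · omega
  · unfold D; nlinarith [Int.natCast_nonneg n]
  · unfold D; nlinarith [Int.natCast_nonneg n]

lemma tt_odd_hi {k : ℤ} (h0 : (n:ℤ)+1 ≤ k) (h1 : k ≤ 3*(n:ℤ)+1) : tt n (8*(n:ℤ)+5+2*k) = 4*(n:ℤ)+k := by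
  have h := tt_eq (n := n) (i := 8*(n:ℤ)+5+2*k) (q := 4*(n:ℤ)+k-1) ?_ ?_
  · omega
  · unfold D; nlinarith [Int.natCast_nonneg n]
  · unfold D; nlinarith [Int.natCast_nonneg n]

lemma cc_even (m : ℤ) : cc (2*m) = m := cc_eq (by omega) (by omega)
lemma cc_odd (m : ℤ) : cc (2*m+1) = m := cc_eq (by omega) (by omega)

/-- hole k, for 0 ≤ k < 2n -/
def holeSet (n : ℕ) (ε : ℝ) (k : ℤ) : Set (ℝ×ℝ) :=
  Ioo (((8*(n:ℤ)+5+2*k : ℤ) : ℝ)*ε) (((8*(n:ℤ)+5+2*k + (if k < (n:ℤ) then 1 else 2) : ℤ) : ℝ)*ε) ×ˢ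
  Ioo (((4*(n:ℤ)+1+k : ℤ) : ℝ)*ε) (((4*(n:ℤ)+2+k : ℤ) : ℝ)*ε)

variable {ε : ℝ}
variable (hn : 0 < n) (hε : 0 < ε)
include hn hε

lemma holeSet_sub (k : ℤ) (hk0 : 0 ≤ k) (hk1 : k < 2*(n:ℤ)) :
    holeSet n ε k ⊆ (pixelation ε (angle (1/2) ((n:ℝ)/(2*n+1))))ᶜ := by
  intro q hq
  obtain ⟨hq1, hq2⟩ := hq
  rw [Set.mem_Ioo] at hq1 hq2
  rw [mem_compl_X_iff n hn hε]
  intro i j hb hpix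
  rw [mem_pixel] at hpix
  obtain ⟨p1, p2, p3, p4⟩ := hpix
  -- determine j
  have hj := between_int hε p3 p4 hq2.1 hq2.2
  have hj' : j = 4*(n:ℤ)+2+k := by omega
  subst hj'
  -- determine i
  by_cases hkn : k < (n:ℤ)
  · rw [if_pos hkn] at hq1
    have hi := between_int hε p1 p2 hq1.1 hq1.2
    have hi' : i = 8*(n:ℤ)+6+2*k := by omega
    subst hi'
    have htt : tt n (8*(n:ℤ)+6+2*k) = 4*(n:ℤ)+1+k := by
      have := tt_even_band (n := n) (m := 4*(n:ℤ)+3+k) (by omega) (by omega)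
      have he : 2*(4*(n:ℤ)+3+k) = 8*(n:ℤ)+6+2*k := by ring
      rw [he] at this; omega
    have hcc : cc (8*(n:ℤ)+6+2*k) = 4*(n:ℤ)+3+k := by
      have := cc_even (4*(n:ℤ)+3+k)
      have he : 2*(4*(n:ℤ)+3+k) = 8*(n:ℤ)+6+2*k := by ring
      rw [he] at this; omega
    rcases hb with ⟨hi1, ⟨hb1, hb2⟩ | ⟨hb1, hb2⟩⟩ | ⟨hi0, _⟩
    · omega
    · omega
    · omega
  · rw [if_neg hkn] at hq1
    have hi := between_int hε p1 p2 hq1.1 hq1.2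
    have hi' : i = 8*(n:ℤ)+6+2*k ∨ i = 8*(n:ℤ)+7+2*k := by omega
    have htt1 : tt n (8*(n:ℤ)+6+2*k) = 4*(n:ℤ)+1+k := by
      have := tt_even_band (n := n) (m := 4*(n:ℤ)+3+k) (by omega) (by omega)
      have he : 2*(4*(n:ℤ)+3+k) = 8*(n:ℤ)+6+2*k := by ring
      rw [he] at this; omega
    have hcc1 : cc (8*(n:ℤ)+6+2*k) = 4*(n:ℤ)+3+k := by
      have := cc_even (4*(n:ℤ)+3+k)
      have he : 2*(4*(n:ℤ)+3+k) = 8*(n:ℤ)+6+2*k := by ring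
      rw [he] at this; omega
    have htt2 : tt n (8*(n:ℤ)+7+2*k) = 4*(n:ℤ)+1+k := by
      have := tt_odd_hi (n := n) (k := k+1) (by omega) (by omega)
      have he : 8*(n:ℤ)+5+2*(k+1) = 8*(n:ℤ)+7+2*k := by ring
      rw [he] at this; omega
    have hcc2 : cc (8*(n:ℤ)+7+2*k) = 4*(n:ℤ)+3+k := by
      have := cc_odd (4*(n:ℤ)+3+k)
      have he : 2*(4*(n:ℤ)+3+k)+1 = 8*(n:ℤ)+7+2*k := by ring
      rw [he] at this; omega
    rcases hi' with rfl | rfl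
    · rcases hb with ⟨hi1, ⟨hb1, hb2⟩ | ⟨hb1, hb2⟩⟩ | ⟨hi0, _⟩ <;> omega
    · rcases hb with ⟨hi1, ⟨hb1, hb2⟩ | ⟨hb1, hb2⟩⟩ | ⟨hi0, _⟩ <;> omega

lemma holeSet_frame (k : ℤ) (hk0 : 0 ≤ k) (hk1 : k < 2*(n:ℤ)) :
    ∀ q ∈ closure (holeSet n ε k),
      q ∈ (pixelation ε (angle (1/2) ((n:ℝ)/(2*n+1))))ᶜ → q ∈ holeSet n ε k := by
  intro q hq hΩ
  set w : ℤ := (if k < (n:ℤ) then 1 else 2) with hw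
  have hw1 : 1 ≤ w := by rw [hw]; split <;> omega
  have hlt1 : ((8*(n:ℤ)+5+2*k : ℤ) : ℝ)*ε < ((8*(n:ℤ)+5+2*k + w : ℤ) : ℝ)*ε := by
    apply mul_lt_mul_of_pos_right _ hε
    exact_mod_cast (by omega : (8*(n:ℤ)+5+2*k) < 8*(n:ℤ)+5+2*k + w)
  have hlt2 : ((4*(n:ℤ)+1+k : ℤ) : ℝ)*ε < ((4*(n:ℤ)+2+k : ℤ) : ℝ)*ε := by
    apply mul_lt_mul_of_pos_right _ hε
    exact_mod_cast (by omega : (4*(n:ℤ)+1+k) < 4*(n:ℤ)+2+k)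
  rw [holeSet, closure_prod_eq, closure_Ioo hlt1.ne, closure_Ioo hlt2.ne] at hq
  obtain ⟨hx, hy⟩ := hq
  rw [Set.mem_Icc] at hx hy
  rw [mem_compl_X_iff n hn hε] at hΩ
  by_contra hq
  rw [holeSet, Set.mem_prod] at hq
  -- q is on the frame: find a pixel of X containing q
  have hcase : q.1 = ((8*(n:ℤ)+5+2*k : ℤ) : ℝ)*ε ∨ q.1 = ((8*(n:ℤ)+5+2*k + w : ℤ) : ℝ)*ε ∨
      q.2 = ((4*(n:ℤ)+1+k : ℤ) : ℝ)*ε ∨ q.2 = ((4*(n:ℤ)+2+k : ℤ) : ℝ)*ε := by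
    by_contra hc
    push_neg at hc
    exact hq ⟨⟨lt_of_le_of_ne hx.1 (Ne.symm hc.1), lt_of_le_of_ne hx.2 hc.2.1⟩,
      ⟨lt_of_le_of_ne hy.1 (Ne.symm hc.2.2.1), lt_of_le_of_ne hy.2 hc.2.2.2⟩⟩
  have hccA : cc (8*(n:ℤ)+5+2*k) = 4*(n:ℤ)+2+k := by
    have := cc_odd (4*(n:ℤ)+2+k)
    have he : 2*(4*(n:ℤ)+2+k)+1 = 8*(n:ℤ)+5+2*k := by ring
    rw [he] at this; omega
  rcases hcase with hc | hc | hc | hc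
  · -- left side: pixel (8n+5+2k, 4n+2+k), upper staircase
    apply hΩ (8*(n:ℤ)+5+2*k) (4*(n:ℤ)+2+k)
    · exact Or.inl ⟨by omega, Or.inr ⟨by omega, by omega⟩⟩
    · rw [mem_pixel]
      refine ⟨?_, ?_, ?_, ?_⟩
      · rw [hc]; try push_cast; try linarith
      · rw [hc]; try push_cast; try linarith
      · push_cast at hy ⊢; linarith [hy.1]
      · push_cast at hy ⊢; linarith [hy.2]
  · -- right side: pixel (8n+6+2k+w, 4n+2+k), lower staircase with tt = 4n+2+k
    have htt : tt n (8*(n:ℤ)+6+2*k+w) = 4*(n:ℤ)+2+k := by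
      rw [hw]
      split
      · have := tt_odd_lo (n := n) (k := k+1) (by omega) (by omega)
        have he : 8*(n:ℤ)+5+2*(k+1) = 8*(n:ℤ)+6+2*k+1 := by ring
        rw [he] at this; omega
      · have := tt_even_band (n := n) (m := 4*(n:ℤ)+4+k) (by omega) (by omega)
        have he : 2*(4*(n:ℤ)+4+k) = 8*(n:ℤ)+6+2*k+2 := by ring
        rw [he] at this; omega
    have haa := aa_le_tt (n := n) (8*(n:ℤ)+6+2*k+w)
    apply hΩ (8*(n:ℤ)+6+2*k+w) (4*(n:ℤ)+2+k)
    · exact Or.inl ⟨by omega, Or.inl ⟨by omega, by omega⟩⟩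
    · rw [mem_pixel]
      refine ⟨?_, ?_, ?_, ?_⟩
      · rw [hc]; try push_cast; try linarith
      · rw [hc]; try push_cast; try linarith
      · push_cast at hy ⊢; linarith [hy.1]
      · push_cast at hy ⊢; linarith [hy.2]
  · -- bottom side
    by_cases hside : q.1 ≤ ((8*(n:ℤ)+6+2*k : ℤ) : ℝ)*ε
    · have htt : tt n (8*(n:ℤ)+6+2*k) = 4*(n:ℤ)+1+k := by
        have := tt_even_band (n := n) (m := 4*(n:ℤ)+3+k) (by omega) (by omega)
        have he : 2*(4*(n:ℤ)+3+k) = 8*(n:ℤ)+6+2*k := by ring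
        rw [he] at this; omega
      have haa := aa_le_tt (n := n) (8*(n:ℤ)+6+2*k)
      apply hΩ (8*(n:ℤ)+6+2*k) (4*(n:ℤ)+1+k)
      · exact Or.inl ⟨by omega, Or.inl ⟨by omega, by omega⟩⟩
      · rw [mem_pixel]
        refine ⟨?_, ?_, ?_, ?_⟩
        · push_cast at hx ⊢; linarith [hx.1]
        · push_cast at hside ⊢; linarith
        · rw [hc]; try push_cast; try linarith
        · rw [hc]; try push_cast; try linarith
    · push_neg at hside
      have hkn : ¬ (k < (n:ℤ)) := by
        intro hkn
        rw [hw, if_pos hkn] at hx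
        have h2 := hx.2
        push_cast at h2 hside
        linarith
      have htt : tt n (8*(n:ℤ)+7+2*k) = 4*(n:ℤ)+1+k := by
        have := tt_odd_hi (n := n) (k := k+1) (by omega) (by omega)
        have he : 8*(n:ℤ)+5+2*(k+1) = 8*(n:ℤ)+7+2*k := by ring
        rw [he] at this; omega
      have haa := aa_le_tt (n := n) (8*(n:ℤ)+7+2*k)
      apply hΩ (8*(n:ℤ)+7+2*k) (4*(n:ℤ)+1+k)
      · exact Or.inl ⟨by omega, Or.inl ⟨by omega, by omega⟩⟩
      · rw [mem_pixel]
        have hx2 := hx.2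
        rw [hw, if_neg hkn] at hx2
        refine ⟨?_, ?_, ?_, ?_⟩
        · push_cast at hside ⊢; linarith
        · push_cast at hx2 ⊢; linarith
        · rw [hc]; try push_cast; try linarith
        · rw [hc]; try push_cast; try linarith
  · -- top side
    by_cases hside : q.1 ≤ ((8*(n:ℤ)+6+2*k : ℤ) : ℝ)*ε
    · have hcc : cc (8*(n:ℤ)+6+2*k) = 4*(n:ℤ)+3+k := by
        have := cc_even (4*(n:ℤ)+3+k)
        have he : 2*(4*(n:ℤ)+3+k) = 8*(n:ℤ)+6+2*k := by ring
        rw [he] at this; omega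
      apply hΩ (8*(n:ℤ)+6+2*k) (4*(n:ℤ)+3+k)
      · exact Or.inl ⟨by omega, Or.inr ⟨by omega, by omega⟩⟩
      · rw [mem_pixel]
        refine ⟨?_, ?_, ?_, ?_⟩
        · push_cast at hx ⊢; linarith [hx.1]
        · push_cast at hside ⊢; linarith
        · rw [hc]; try push_cast; try linarith
        · rw [hc]; try push_cast; try linarith
    · push_neg at hside
      have hkn : ¬ (k < (n:ℤ)) := by
        intro hkn
        rw [hw, if_pos hkn] at hx
        have h2 := hx.2
        push_cast at h2 hside
        linarith
      have hcc : cc (8*(n:ℤ)+7+2*k) = 4*(n:ℤ)+3+k := by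
        have := cc_odd (4*(n:ℤ)+3+k)
        have he : 2*(4*(n:ℤ)+3+k)+1 = 8*(n:ℤ)+7+2*k := by ring
        rw [he] at this; omega
      apply hΩ (8*(n:ℤ)+7+2*k) (4*(n:ℤ)+3+k)
      · exact Or.inl ⟨by omega, Or.inr ⟨by omega, by omega⟩⟩
      · rw [mem_pixel]
        have hx2 := hx.2
        rw [hw, if_neg hkn] at hx2
        refine ⟨?_, ?_, ?_, ?_⟩
        · push_cast at hside ⊢; linarith
        · push_cast at hx2 ⊢; linarith
        · rw [hc]; try push_cast; try linarith
        · rw [hc]; try push_cast; try linarith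

lemma holeSet_comp (k : ℤ) (hk0 : 0 ≤ k) (hk1 : k < 2*(n:ℤ)) {x : ℝ×ℝ}
    (hx : x ∈ holeSet n ε k) :
    connectedComponentIn (pixelation ε (angle (1/2) ((n:ℝ)/(2*n+1))))ᶜ x = holeSet n ε k := by
  apply comp_eq_of_clopen
  · exact (isOpen_Ioo).prod (isOpen_Ioo)
  · exact ((convex_Ioo _ _).prod (convex_Ioo _ _)).isPreconnected
  · exact holeSet_sub hn hε k hk0 hk1
  · exact holeSet_frame hn hε k hk0 hk1
  · exact hx

omit hn hε in
lemma holeSet_bounded (k : ℤ) : IsBounded (holeSet n ε k) := by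
  have hsub : holeSet n ε k ⊆
      Icc (((8*(n:ℤ)+5+2*k : ℤ) : ℝ)*ε) (((8*(n:ℤ)+5+2*k + (if k < (n:ℤ) then 1 else 2) : ℤ) : ℝ)*ε) ×ˢ
      Icc (((4*(n:ℤ)+1+k : ℤ) : ℝ)*ε) (((4*(n:ℤ)+2+k : ℤ) : ℝ)*ε) :=
    Set.prod_mono Set.Ioo_subset_Icc_self Set.Ioo_subset_Icc_self
  exact ((Metric.isBounded_Icc _ _).prod (Metric.isBounded_Icc _ _)).subset hsub

omit hn in
lemma holeSet_nonempty (k : ℤ) :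
    (((8*(n:ℤ)+5+2*k : ℤ) : ℝ)*ε + ε/2, ((4*(n:ℤ)+1+k : ℤ) : ℝ)*ε + ε/2) ∈ holeSet n ε k := by
  constructor
  · constructor
    · simp only; linarith
    · simp only
      have h1 : ((8*(n:ℤ)+5+2*k : ℤ) : ℝ) + 1 ≤ ((8*(n:ℤ)+5+2*k + (if k < (n:ℤ) then 1 else 2) : ℤ) : ℝ) := by
        have : (8*(n:ℤ)+5+2*k) + 1 ≤ 8*(n:ℤ)+5+2*k + (if k < (n:ℤ) then 1 else 2) := by
          split <;> omega
        exact_mod_cast this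
      nlinarith
  · constructor
    · simp only; linarith
    · simp only
      have h1 : ((4*(n:ℤ)+1+k : ℤ) : ℝ) + 1 = ((4*(n:ℤ)+2+k : ℤ) : ℝ) := by push_cast; ring
      nlinarith

end holes

section escape
variable {n : ℕ} {ε : ℝ}

/-- real-scaled comparison helpers -/
lemma ilt_of_mul {a b : ℤ} (hε : 0 < ε) (h : (a:ℝ)*ε < (b:ℝ)*ε) : a < b := by
  have := lt_of_mul_lt_mul_right h hε.le
  exact_mod_cast this

lemma ile_of_mul {a b : ℤ} (hε : 0 < ε) (h : (a:ℝ)*ε ≤ (b:ℝ)*ε) : a ≤ b := by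
  have := le_of_mul_le_mul_right h hε
  exact_mod_cast this

lemma mul_lt_mulr {a b : ℤ} (hε : 0 < ε) (h : a < b) : (a:ℝ)*ε < (b:ℝ)*ε := by
  apply mul_lt_mul_of_pos_right _ hε
  exact_mod_cast h

lemma mul_le_mulr {a b : ℤ} (hε : 0 < ε) (h : a ≤ b) : (a:ℝ)*ε ≤ (b:ℝ)*ε := by
  apply mul_le_mul_of_nonneg_right _ hε.le
  exact_mod_cast h

/-- Avoidance predicate: q is outside every block pixel. -/
def Avoids (n : ℕ) (ε : ℝ) (q : ℝ×ℝ) : Prop := ∀ i j : ℤ, Blk n i j → q ∉ pixel ε i j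

lemma escape_down (hn : 0 < n) (hε : 0 < ε) {p : ℝ×ℝ}
    (hp : ∀ i j : ℤ, Blk n i j → ((i:ℝ)-1)*ε ≤ p.1 → p.1 ≤ (i:ℝ)*ε → p.2 < ((j:ℝ)-1)*ε) :
    ∃ T, IsPreconnected T ∧ (∀ q ∈ T, Avoids n ε q) ∧ p ∈ T ∧ ¬ IsBounded T := by
  refine ⟨({p.1} ×ˢ Icc (min p.2 (-2*ε)) (max p.2 (-2*ε))) ∪ ((univ : Set ℝ) ×ˢ {-2*ε}),
    ?_, ?_, ?_, ?_⟩
  · apply IsPreconnected.union (p.1, -2*ε)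
    · exact ⟨rfl, min_le_right _ _, le_max_right _ _⟩
    · exact ⟨trivial, rfl⟩
    · exact ((convex_singleton _).prod (convex_Icc _ _)).isPreconnected
    · exact ((convex_univ).prod (convex_singleton _)).isPreconnected
  · rintro q (⟨hq1, hq2⟩ | ⟨-, hq2⟩) i j hb hpix
    · rw [mem_pixel] at hpix
      obtain ⟨p1, p2, p3, p4⟩ := hpix
      rw [Set.mem_singleton_iff] at hq1
      rw [Set.mem_Icc] at hq2
      rw [hq1] at p1 p2
      have hlt := hp i j hb p1 p2
      rcases max_cases p.2 (-2*ε) with ⟨hm, _⟩ | ⟨hm, _⟩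
      · rw [hm] at hq2; linarith [hq2.2]
      · rw [hm] at hq2
        have : ((j:ℝ)-1)*ε ≤ -2*ε := le_trans p3 hq2.2
        have hj : (j:ℝ)-1 ≤ -2 := by
          have := le_of_mul_le_mul_right (by linarith : ((j:ℝ)-1)*ε ≤ (-2)*ε) hε
          linarith
        have hj' : j ≤ -1 := by exact_mod_cast (by linarith : (j:ℝ) ≤ -1)
        have := blk_j_nonneg hb
        omega
    · rw [mem_pixel] at hpix
      obtain ⟨p1, p2, p3, p4⟩ := hpix
      rw [Set.mem_singleton_iff] at hq2
      rw [hq2] at p3 p4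
      have hj : (j:ℝ)-1 ≤ -2 := by
        have := le_of_mul_le_mul_right (by linarith : ((j:ℝ)-1)*ε ≤ (-2)*ε) hε
        linarith
      have hj' : j ≤ -1 := by exact_mod_cast (by linarith : (j:ℝ) ≤ -1)
      have := blk_j_nonneg hb
      omega
  · exact Or.inl ⟨rfl, min_le_left _ _, le_max_left _ _⟩
  · apply unbounded_of_norm
    intro r
    refine ⟨(max r 0 + 1, -2*ε), Or.inr ⟨trivial, rfl⟩, ?_⟩
    have h1 : ‖(max r 0 + 1 : ℝ)‖ ≤ ‖((max r 0 + 1, -2*ε) : ℝ×ℝ)‖ :=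
      norm_fst_le ((max r 0 + 1, -2*ε) : ℝ×ℝ)
    have h2 : r ≤ max r 0 + 1 := by have := le_max_left r 0; linarith
    have h3 : max r 0 + 1 ≤ ‖(max r 0 + 1 : ℝ)‖ := by
      rw [Real.norm_eq_abs]; exact le_abs_self _
    linarith

lemma escape_up (hn : 0 < n) (hε : 0 < ε) {p : ℝ×ℝ}
    (hp : ∀ i j : ℤ, Blk n i j → ((i:ℝ)-1)*ε ≤ p.1 → p.1 ≤ (i:ℝ)*ε → (j:ℝ)*ε < p.2) :
    ∃ T, IsPreconnected T ∧ (∀ q ∈ T, Avoids n ε q) ∧ p ∈ T ∧ ¬ IsBounded T := by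
  refine ⟨{p.1} ×ˢ Ici p.2, ((convex_singleton _).prod (convex_Ici _)).isPreconnected,
    ?_, ⟨rfl, Set.self_mem_Ici⟩, ?_⟩
  · rintro q ⟨hq1, hq2⟩ i j hb hpix
    rw [mem_pixel] at hpix
    obtain ⟨p1, p2, p3, p4⟩ := hpix
    rw [Set.mem_singleton_iff] at hq1
    rw [Set.mem_Ici] at hq2
    rw [hq1] at p1 p2
    have := hp i j hb p1 p2
    linarith
  · apply unbounded_of_norm
    intro r
    refine ⟨(p.1, max r p.2), ⟨rfl, Set.mem_Ici.mpr (le_max_right _ _)⟩, ?_⟩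
    have h1 : ‖(max r p.2 : ℝ)‖ ≤ ‖((p.1, max r p.2) : ℝ×ℝ)‖ :=
      norm_snd_le ((p.1, max r p.2) : ℝ×ℝ)
    have h3 : max r p.2 ≤ ‖(max r p.2 : ℝ)‖ := by
      rw [Real.norm_eq_abs]; exact le_abs_self _
    linarith [le_max_left r p.2]

/-- open middle strip of column i -/
def Rset (n : ℕ) (ε : ℝ) (i : ℤ) : Set (ℝ×ℝ) :=
  Ioo (((i:ℝ)-1)*ε) ((i:ℝ)*ε) ×ˢ Ioo ((tt n i : ℝ)*ε) (((cc i : ℝ)-1)*ε)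

/-- open passage straddling the line between columns i and i+1 -/
def Sset (n : ℕ) (ε : ℝ) (i : ℤ) : Set (ℝ×ℝ) :=
  Ioo (((i:ℝ)-1/2)*ε) (((i:ℝ)+1/2)*ε) ×ˢ Ioo ((tt n (i+1) : ℝ)*ε) (((cc i : ℝ)-1)*ε)

/-- the unbounded channel between the two staircases -/
def Chan (n : ℕ) (ε : ℝ) : Set (ℝ×ℝ) :=
  ⋃ (m : ℕ), (Rset n ε (12*(n:ℤ)+6+m) ∪ Sset n ε (12*(n:ℤ)+6+m))

lemma Rset_avoids (hn : 0 < n) (hε : 0 < ε) {i : ℤ} (hi : 12*(n:ℤ)+6 ≤ i) :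
    ∀ q ∈ Rset n ε i, Avoids n ε q := by
  rintro q ⟨hq1, hq2⟩ i' j hb hpix
  rw [mem_pixel] at hpix
  obtain ⟨p1, p2, p3, p4⟩ := hpix
  rw [Set.mem_Ioo] at hq1 hq2
  -- i' = i
  have e1 : (i':ℤ) - 1 < i := by
    have : ((i':ℝ)-1)*ε < (i:ℝ)*ε := lt_of_le_of_lt p1 hq1.2
    have : ((i' - 1 : ℤ):ℝ)*ε < (i:ℝ)*ε := by push_cast; push_cast at this; linarith
    exact ilt_of_mul hε this
  have e2 : i - 1 < i' := by
    have : ((i:ℝ)-1)*ε < (i':ℝ)*ε := lt_of_lt_of_le hq1.1 p2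
    have : ((i - 1 : ℤ):ℝ)*ε < ((i':ℤ):ℝ)*ε := by push_cast; push_cast at this; linarith
    exact ilt_of_mul hε this
  have hii : i' = i := by omega
  subst hii
  -- row bounds
  have f1 : tt n i' < j := by
    have : ((tt n i' : ℤ):ℝ)*ε < ((j:ℤ):ℝ)*ε := lt_of_lt_of_le hq2.1 p4
    exact ilt_of_mul hε this
  have f2 : j - 1 < cc i' - 1 := by
    have : ((j - 1 : ℤ):ℝ)*ε < ((cc i' - 1 : ℤ):ℝ)*ε := by
      push_cast
      have := lt_of_le_of_lt p3 hq2.2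
      push_cast at this
      linarith
    exact ilt_of_mul hε this
  rcases hb with ⟨hi1, ⟨hb1, hb2⟩ | ⟨hb1, hb2⟩⟩ | ⟨hi0, _⟩
  · omega
  · omega
  · omega

lemma Sset_avoids (hn : 0 < n) (hε : 0 < ε) {i : ℤ} (hi : 12*(n:ℤ)+6 ≤ i) :
    ∀ q ∈ Sset n ε i, Avoids n ε q := by
  rintro q ⟨hq1, hq2⟩ i' j hb hpix
  rw [mem_pixel] at hpix
  obtain ⟨p1, p2, p3, p4⟩ := hpix
  rw [Set.mem_Ioo] at hq1 hq2
  have e1 : i' ≤ i + 1 := by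
    have h : ((i':ℝ)-1)*ε < ((i:ℝ)+1/2)*ε := lt_of_le_of_lt p1 hq1.2
    have h2 : ((2*i' - 2 : ℤ):ℝ)*ε < ((2*i + 1 : ℤ):ℝ)*ε := by push_cast; linarith
    have := ilt_of_mul hε h2
    omega
  have e2 : i ≤ i' := by
    have h : ((i:ℝ)-1/2)*ε < (i':ℝ)*ε := lt_of_lt_of_le hq1.1 p2
    have h2 : ((2*i - 1 : ℤ):ℝ)*ε < ((2*i' : ℤ):ℝ)*ε := by push_cast; linarith
    have := ilt_of_mul hε h2
    omega
  have f1 : tt n (i+1) < j := by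
    have : ((tt n (i+1) : ℤ):ℝ)*ε < ((j:ℤ):ℝ)*ε := lt_of_lt_of_le hq2.1 p4
    exact ilt_of_mul hε this
  have f2 : j ≤ cc i - 1 := by
    have h : ((j - 1 : ℤ):ℝ)*ε < ((cc i - 1 : ℤ):ℝ)*ε := by
      push_cast
      have := lt_of_le_of_lt p3 hq2.2
      push_cast at this
      linarith
    have := ilt_of_mul hε h
    omega
  have htm := tt_mono (n := n) i
  have hcm := cc_mono i
  have hcase : i' = i ∨ i' = i + 1 := by omega
  rcases hb with ⟨hi1, ⟨hb1, hb2⟩ | ⟨hb1, hb2⟩⟩ | ⟨hi0, _⟩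
  · rcases hcase with rfl | rfl <;> omega
  · rcases hcase with rfl | rfl <;> omega
  · omega

lemma chan_avoids (hn : 0 < n) (hε : 0 < ε) : ∀ q ∈ Chan n ε, Avoids n ε q := by
  rintro q hq
  rw [Chan, mem_iUnion] at hq
  obtain ⟨m, hm⟩ := hq
  have hi : 12*(n:ℤ)+6 ≤ 12*(n:ℤ)+6+m := by omega
  rcases hm with h | h
  · exact Rset_avoids hn hε hi q h
  · exact Sset_avoids hn hε hi q h

lemma chan_preconnected (hn : 0 < n) (hε : 0 < ε) : IsPreconnected (Chan n ε) := by
  apply IsPreconnected.iUnion_of_chain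
  · intro m
    set i : ℤ := 12*(n:ℤ)+6+m with hidef
    have hi : 12*(n:ℤ)+6 ≤ i := by omega
    have harith := chan_arith (n := n) hi
    have htm := tt_mono (n := n) i
    apply IsPreconnected.union (((i:ℝ)-1/4)*ε, ((cc i : ℝ)-3/2)*ε)
    · constructor
      · constructor
        · apply mul_lt_mul_of_pos_right _ hε; linarith
        · apply mul_lt_mul_of_pos_right _ hε; linarith
      · constructor
        · apply mul_lt_mul_of_pos_right _ hε
          have : (tt n i : ℝ) ≤ (cc i : ℝ) - 2 := by exact_mod_cast (by omega : tt n i ≤ cc i - 2)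
          linarith
        · apply mul_lt_mul_of_pos_right _ hε; linarith
    · constructor
      · constructor
        · apply mul_lt_mul_of_pos_right _ hε; linarith
        · apply mul_lt_mul_of_pos_right _ hε; linarith
      · constructor
        · apply mul_lt_mul_of_pos_right _ hε
          have : (tt n (i+1) : ℝ) ≤ (cc i : ℝ) - 2 := by exact_mod_cast harith
          linarith
        · apply mul_lt_mul_of_pos_right _ hε; linarith
    · exact ((convex_Ioo _ _).prod (convex_Ioo _ _)).isPreconnected
    · exact ((convex_Ioo _ _).prod (convex_Ioo _ _)).isPreconnected
  · intro m
    set i : ℤ := 12*(n:ℤ)+6+m with hidef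
    have hi : 12*(n:ℤ)+6 ≤ i := by omega
    have harith := chan_arith (n := n) hi
    have hcm := cc_mono i
    refine ⟨(((i:ℝ)+1/4)*ε, ((cc i : ℝ)-3/2)*ε), Or.inr ⟨⟨?_, ?_⟩, ⟨?_, ?_⟩⟩, ?_⟩
    · apply mul_lt_mul_of_pos_right _ hε; linarith
    · apply mul_lt_mul_of_pos_right _ hε; linarith
    · apply mul_lt_mul_of_pos_right _ hε
      have : (tt n (i+1) : ℝ) ≤ (cc i : ℝ) - 2 := by exact_mod_cast harith
      linarith
    · apply mul_lt_mul_of_pos_right _ hε; linarith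
    · left
      have he : (12*(n:ℤ)+6+((m+1 : ℕ):ℤ)) = i + 1 := by push_cast; omega
      rw [Order.succ_eq_add_one, he]
      constructor
      · constructor
        · apply mul_lt_mul_of_pos_right _ hε; push_cast; linarith
        · apply mul_lt_mul_of_pos_right _ hε; push_cast; linarith
      · constructor
        · apply mul_lt_mul_of_pos_right _ hε
          have : (tt n (i+1) : ℝ) ≤ (cc i : ℝ) - 2 := by exact_mod_cast harith
          linarith
        · apply mul_lt_mul_of_pos_right _ hε
          have : (cc i : ℝ) ≤ (cc (i+1) : ℝ) := by exact_mod_cast hcm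
          linarith

lemma chan_unbounded (hn : 0 < n) (hε : 0 < ε) : ¬ IsBounded (Chan n ε) := by
  apply unbounded_of_norm
  intro r
  obtain ⟨m, hm⟩ := exists_nat_ge (r/ε)
  set i : ℤ := 12*(n:ℤ)+6+m with hidef
  have hi : 12*(n:ℤ)+6 ≤ i := by omega
  have harith := chan_arith (n := n) hi
  have htm := tt_mono (n := n) i
  have hy1 : (tt n i : ℝ)*ε < ((cc i : ℝ)-3/2)*ε := by
    apply mul_lt_mul_of_pos_right _ hε
    have : (tt n i : ℝ) ≤ (cc i : ℝ) - 2 := by exact_mod_cast (by omega : tt n i ≤ cc i - 2)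
    linarith
  have hy2 : ((cc i : ℝ)-3/2)*ε < ((cc i : ℝ)-1)*ε := by
    apply mul_lt_mul_of_pos_right _ hε; linarith
  have hx1 : (((i:ℝ)-1))*ε < ((i:ℝ)-1/4)*ε := by
    apply mul_lt_mul_of_pos_right _ hε; linarith
  have hx2 : (((i:ℝ)-1/4))*ε < (i:ℝ)*ε := by
    apply mul_lt_mul_of_pos_right _ hε; linarith
  refine ⟨(((i:ℝ)-1/4)*ε, ((cc i : ℝ)-3/2)*ε), ?_, ?_⟩
  · rw [Chan, mem_iUnion]
    exact ⟨m, Or.inl ⟨⟨hx1, hx2⟩, ⟨hy1, hy2⟩⟩⟩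
  · have h1 : ‖((((i:ℝ)-1/4)*ε : ℝ))‖ ≤ ‖((((i:ℝ)-1/4)*ε, ((cc i : ℝ)-3/2)*ε) : ℝ×ℝ)‖ :=
      norm_fst_le (((((i:ℝ)-1/4)*ε), (((cc i : ℝ)-3/2)*ε)) : ℝ×ℝ)
    have h2 : r ≤ ((i:ℝ)-1/4)*ε := by
      have hm' : r ≤ (m:ℝ)*ε := by
        rw [div_le_iff₀ hε] at hm
        linarith
      have : (m:ℝ)*ε ≤ ((i:ℝ)-1/4)*ε := by
        apply mul_le_mul_of_nonneg_right _ hε.le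
        have : ((m:ℕ):ℝ) ≤ (i:ℝ) - 1 := by
          rw [hidef]; push_cast
          have : (0:ℝ) ≤ (n:ℝ) := Nat.cast_nonneg n
          linarith
        linarith
      linarith
    have h3 : ((i:ℝ)-1/4)*ε ≤ ‖((((i:ℝ)-1/4)*ε : ℝ))‖ := by
      rw [Real.norm_eq_abs]; exact le_abs_self _
    linarith

lemma aa_eq {i q : ℤ} (h1 : D n * (q-1) < (n:ℤ)*(i-1)) (h2 : (n:ℤ)*(i-1) ≤ D n * q) :
    aa n i = q := by
  obtain ⟨a1, a2⟩ := aa_spec n i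
  have e1 := mul_lt_cancel (n := n) (by linarith : D n * (q-1) < D n * (aa n i))
  have e2 := mul_lt_cancel (n := n) (by linarith : D n * (aa n i - 1) < D n * q)
  omega

lemma aa_one : aa n 1 = 0 := by
  apply aa_eq <;> [skip; skip]
  · have := D_pos n; nlinarith
  · simp

lemma tt_one : tt n 1 = 1 := by
  have h := tt_eq (n := n) (i := 1) (q := 0) ?_ ?_
  · omega
  · simp
  · unfold D; omega

lemma cc_one : cc 1 = 0 := cc_eq (by omega) (by omega)

/-- position of a complement point within a column: below, middle, or above -/
lemma col_position (hn : 0 < n) (hε : 0 < ε) {p : ℝ×ℝ} (hp : Avoids n ε p) {c : ℤ}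
    (hc : 1 ≤ c) (h1 : ((c:ℝ)-1)*ε ≤ p.1) (h2 : p.1 ≤ (c:ℝ)*ε) :
    p.2 < ((aa n c : ℝ)-1)*ε ∨
    ((tt n c : ℝ)*ε < p.2 ∧ p.2 < ((cc c : ℝ)-1)*ε) ∨
    ((cc c : ℝ)+1)*ε < p.2 := by
  set j1 : ℤ := ⌈p.2/ε⌉ with hj1def
  have hup : p.2 ≤ (j1:ℝ)*ε := by
    calc p.2 = (p.2/ε)*ε := by field_simp
      _ ≤ (j1:ℝ)*ε := mul_le_mul_of_nonneg_right (Int.le_ceil _) hε.le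
  have hlow : ((j1:ℝ)-1)*ε < p.2 := by
    have h := Int.ceil_lt_add_one (p.2/ε)
    have : ((j1:ℝ)-1) < p.2/ε := by push_cast at h ⊢; linarith
    calc ((j1:ℝ)-1)*ε < (p.2/ε)*ε := mul_lt_mul_of_pos_right this hε
      _ = p.2 := by field_simp
  have hmem1 : p ∈ pixel ε c j1 := mem_pixel.mpr ⟨h1, h2, by push_cast; linarith, hup⟩
  have hb1 : ¬ Blk n c j1 := fun hb => hp c j1 hb hmem1
  have hsplit1 : (j1 < aa n c ∨ tt n c < j1) ∧ (j1 < cc c ∨ cc c + 1 < j1) := by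
    unfold Blk at hb1; omega
  have haat := aa_le_tt (n := n) c
  have haac := aa_le_cc (n := n) hc
  have htcc := tt_le_cc_succ (n := n) hc
  have hedge_blk : p.2 = (j1:ℝ)*ε →
      (j1 + 1 < aa n c ∨ tt n c < j1 + 1) ∧ (j1 + 1 < cc c ∨ cc c + 1 < j1 + 1) := by
    intro he
    have hmem2 : p ∈ pixel ε c (j1+1) := by
      apply mem_pixel.mpr
      refine ⟨h1, h2, ?_, ?_⟩
      · push_cast; rw [he]; push_cast; linarith
      · rw [he]; apply mul_le_mulr hε; omega
    have hb2 : ¬ Blk n c (j1+1) := fun hb => hp c (j1+1) hb hmem2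
    unfold Blk at hb2; omega
  rcases hsplit1.1 with hA | hA
  · rcases hsplit1.2 with hB | hB
    · left
      by_cases hedge : p.2 = (j1:ℝ)*ε
      · obtain ⟨hs1, _⟩ := hedge_blk hedge
        have hj : j1 ≤ aa n c - 2 := by omega
        have := mul_le_mulr (a := j1) (b := aa n c - 2) hε hj
        rw [hedge]
        push_cast at this ⊢
        linarith
      · have hlt : p.2 < (j1:ℝ)*ε := lt_of_le_of_ne hup hedge
        have := mul_le_mulr (a := j1) (b := aa n c - 1) hε (by omega)
        push_cast at this ⊢
        linarith
    · exfalso; omega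
  · rcases hsplit1.2 with hB | hB
    · right; left
      constructor
      · have := mul_le_mulr (a := tt n c) (b := j1 - 1) hε (by omega)
        push_cast at this ⊢
        linarith
      · by_cases hedge : p.2 = (j1:ℝ)*ε
        · obtain ⟨_, hs2⟩ := hedge_blk hedge
          have hj : j1 ≤ cc c - 2 := by omega
          have := mul_le_mulr (a := j1) (b := cc c - 2) hε hj
          rw [hedge]
          push_cast at this ⊢
          linarith
        · have hlt : p.2 < (j1:ℝ)*ε := lt_of_le_of_ne hup hedge
          have := mul_le_mulr (a := j1) (b := cc c - 1) hε (by omega)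
          push_cast at this ⊢
          linarith
    · right; right
      have := mul_le_mulr (a := cc c + 1) (b := j1 - 1) hε (by omega)
      push_cast at this ⊢
      linarith

lemma classify (hn : 0 < n) (hε : 0 < ε) {p : ℝ×ℝ} (hp : Avoids n ε p)
    (hh : ∀ k : ℤ, 0 ≤ k → k < 2*(n:ℤ) → p ∉ holeSet n ε k) :
    (∀ i j : ℤ, Blk n i j → ((i:ℝ)-1)*ε ≤ p.1 → p.1 ≤ (i:ℝ)*ε → p.2 < ((j:ℝ)-1)*ε) ∨
    (∀ i j : ℤ, Blk n i j → ((i:ℝ)-1)*ε ≤ p.1 → p.1 ≤ (i:ℝ)*ε → (j:ℝ)*ε < p.2) ∨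
    p ∈ Chan n ε := by
  set i1 : ℤ := ⌈p.1/ε⌉ with hi1def
  have hle : p.1 ≤ (i1:ℝ)*ε := by
    calc p.1 = (p.1/ε)*ε := by field_simp
      _ ≤ (i1:ℝ)*ε := mul_le_mul_of_nonneg_right (Int.le_ceil _) hε.le
  have hgt : ((i1:ℝ)-1)*ε < p.1 := by
    have h := Int.ceil_lt_add_one (p.1/ε)
    have h2 : ((i1:ℝ)-1) < p.1/ε := by push_cast at h ⊢; linarith
    calc ((i1:ℝ)-1)*ε < (p.1/ε)*ε := mul_lt_mul_of_pos_right h2 hε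
      _ = p.1 := by field_simp
  have hcols : ∀ i : ℤ, ((i:ℝ)-1)*ε ≤ p.1 → p.1 ≤ (i:ℝ)*ε →
      (i = i1 ∨ (p.1 = (i1:ℝ)*ε ∧ i = i1 + 1)) := by
    intro i hx1 hx2
    have e1 : i - 1 ≤ i1 := by
      apply ile_of_mul hε
      push_cast
      linarith
    have e2 : i1 - 1 < i := by
      apply ilt_of_mul hε
      push_cast
      linarith
    by_cases he : i = i1
    · exact Or.inl he
    · have hi' : i = i1 + 1 := by omega
      subst hi'
      refine Or.inr ⟨le_antisymm hle ?_, rfl⟩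
      have : ((i1 + 1 : ℤ):ℝ)*ε - ε ≤ p.1 := by push_cast at hx1 ⊢; linarith
      push_cast at this ⊢
      linarith
  -- helpers for turning column positions into global bounds
  have below_col : ∀ c : ℤ, 1 ≤ c → p.2 < ((aa n c : ℝ)-1)*ε →
      ∀ j : ℤ, Blk n c j → p.2 < ((j:ℝ)-1)*ε := by
    intro c hc hpb j hb
    have haac := aa_le_cc (n := n) hc
    have hj : aa n c ≤ j := by unfold Blk at hb; omega
    have := mul_le_mulr (a := aa n c - 1) (b := j - 1) hε (by omega)
    push_cast at this ⊢
    linarith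
  have above_col : ∀ c : ℤ, 1 ≤ c → ((cc c : ℝ)+1)*ε < p.2 →
      ∀ j : ℤ, Blk n c j → (j:ℝ)*ε < p.2 := by
    intro c hc hpa j hb
    have htcc := tt_le_cc_succ (n := n) hc
    have hj : j ≤ cc c + 1 := by unfold Blk at hb; omega
    have := mul_le_mulr (a := j) (b := cc c + 1) hε hj
    push_cast at this ⊢
    linarith
  by_cases hcase : 1 ≤ i1
  · have hpos1 := col_position hn hε hp hcase hgt.le hle
    by_cases hedge : p.1 = (i1:ℝ)*ε
    · -- two columns i1 and i1+1
      have hx21 : (((i1+1 : ℤ):ℝ)-1)*ε ≤ p.1 := by push_cast; rw [hedge]; push_cast; linarith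
      have hx22 : p.1 ≤ ((i1+1 : ℤ):ℝ)*ε := by
        rw [hedge]; apply mul_le_mulr hε; omega
      have hpos2 := col_position hn hε hp (c := i1+1) (by omega)
        (by push_cast at hx21 ⊢; linarith) hx22
      have haat1 := aa_le_tt (n := n) i1
      have htm := tt_mono (n := n) i1
      have hast := aa_succ_le_tt (n := n) i1
      have hcm := cc_mono i1
      have hcs := cc_step i1
      have haac1 := aa_le_cc (n := n) hcase
      have htcc1 := tt_le_cc_succ (n := n) hcase
      rcases hpos1 with h1 | ⟨h1a, h1b⟩ | h1 <;> rcases hpos2 with h2 | ⟨h2a, h2b⟩ | h2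
      · -- below, below
        left
        intro i j hb hxa hxb
        rcases hcols i hxa hxb with rfl | ⟨-, rfl⟩
        · exact below_col i1 hcase h1 j hb
        · exact below_col (i1+1) (by omega) (by push_cast at h2 ⊢; linarith) j hb
      · -- below, middle : impossible
        exfalso
        have := mul_le_mulr (a := aa n i1 - 1) (b := tt n (i1+1)) hε (by omega)
        push_cast at this h1 h2a
        linarith
      · -- below, above : impossible
        exfalso
        have := mul_le_mulr (a := aa n i1 - 1) (b := cc (i1+1) + 1) hε (by omega)
        push_cast at this h1 h2
        linarith
      · -- middle, below : impossible
        exfalso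
        have := mul_le_mulr (a := aa n (i1+1) - 1) (b := tt n i1) hε (by omega)
        push_cast at this h1a h2
        linarith
      · -- middle, middle : hole or channel
        have gap1 : tt n i1 ≤ cc i1 - 2 := by
          have h := ilt_of_mul hε (a := tt n i1) (b := cc i1 - 1)
            (by push_cast; push_cast at h1a h1b; linarith)
          omega
        have gap2 : tt n (i1+1) ≤ cc (i1+1) - 2 := by
          have h := ilt_of_mul hε (a := tt n (i1+1)) (b := cc (i1+1) - 1)
            (by push_cast; push_cast at h2a h2b; linarith)
          omega
        by_cases hbig : 12*(n:ℤ)+6 ≤ i1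
        · right; right
          rw [Chan, mem_iUnion]
          have hm0 : 0 ≤ i1 - (12*(n:ℤ)+6) := by omega
          refine ⟨(i1 - (12*(n:ℤ)+6)).toNat, ?_⟩
          have hidx : 12*(n:ℤ)+6+((i1 - (12*(n:ℤ)+6)).toNat : ℤ) = i1 := by
            rw [Int.toNat_of_nonneg hm0]; ring
          rw [hidx]
          right
          refine ⟨⟨?_, ?_⟩, ⟨h2a, h1b⟩⟩
          · rw [hedge]; apply mul_lt_mul_of_pos_right _ hε; linarith
          · rw [hedge]; apply mul_lt_mul_of_pos_right _ hε; linarith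
        · push_neg at hbig
          rcases Int.even_or_odd i1 with ⟨m, hm⟩ | ⟨m, hm⟩
          · -- i1 = 2m even
            have hm' : i1 = 2*m := by omega
            have hcc1 : cc i1 = m := by rw [hm']; exact cc_eq (by omega) (by omega)
            have hcc2 : cc (i1+1) = m := by
              rw [hm']
              have := cc_odd m; omega
            -- bounds on m
            obtain ⟨t1s, t2s⟩ := tt_spec n (i1+1)
            have hx : (n:ℤ)*(i1+1) < D n * (m-2) := by
              calc (n:ℤ)*(i1+1) < D n * (tt n (i1+1)) := t2s
                _ ≤ D n * (m-2) := mul_le_mul_of_nonneg_left (by omega) (D_pos n).le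
            rw [hm'] at hx
            unfold D at hx
            have hm1 : 5*(n:ℤ)+3 ≤ m := by nlinarith
            have hm2 : m ≤ 6*(n:ℤ)+2 := by omega
            have htt1 : tt n i1 = m - 2 := by
              rw [hm']; exact tt_even_band (by omega) (by omega)
            -- p is in hole k
            set k : ℤ := m - 4*(n:ℤ) - 3 with hkdef
            exfalso
            apply hh k (by omega) (by omega)
            have hkn : ¬ (k < (n:ℤ)) := by omega
            constructor
            · constructor
              · rw [hedge]
                apply mul_lt_mulr hε
                push_cast
                omega
              · rw [hedge]
                rw [if_neg hkn]
                apply mul_lt_mulr hε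
                omega
            · constructor
              · have he : ((4*(n:ℤ)+1+k : ℤ):ℝ) = ((m - 2 : ℤ):ℝ) := by
                  exact_mod_cast congrArg (fun z : ℤ => (z:ℝ)) (by omega : (4*(n:ℤ)+1+k) = m - 2)
                rw [he, ← htt1]
                exact h1a
              · have he : ((4*(n:ℤ)+2+k : ℤ):ℝ) = ((m - 1 : ℤ):ℝ) := by
                  exact_mod_cast congrArg (fun z : ℤ => (z:ℝ)) (by omega : (4*(n:ℤ)+2+k) = m - 1)
                rw [he]
                rw [hcc1] at h1b
                push_cast at h1b ⊢
                linarith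
          · -- i1 = 2m+1 odd : contradiction
            exfalso
            have hcc1 : cc i1 = m := by
              rw [hm]; exact cc_odd m
            obtain ⟨t1s, t2s⟩ := tt_spec n i1
            have hx : (n:ℤ)*i1 < D n * (m-2) := by
              calc (n:ℤ)*i1 < D n * (tt n i1) := t2s
                _ ≤ D n * (m-2) := mul_le_mul_of_nonneg_left (by omega) (D_pos n).le
            rw [hm] at hx
            unfold D at hx
            have hm1 : 5*(n:ℤ)+3 ≤ m := by nlinarith
            have hm2 : m ≤ 6*(n:ℤ)+2 := by omega
            have htt2 : tt n (i1+1) = m - 1 := by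
              have he : i1 + 1 = 2*(m+1) := by omega
              rw [he]
              have := tt_even_band (n := n) (m := m+1) (by omega) (by omega)
              omega
            have hr1 : ((tt n (i1+1) : ℤ):ℝ) = (m:ℝ) - 1 := by rw [htt2]; push_cast; ring
            have hr2 : ((cc i1 : ℤ):ℝ) = (m:ℝ) := by rw [hcc1]
            rw [hr1] at h2a
            rw [hr2] at h1b
            linarith
      · -- middle, above : impossible
        exfalso
        have := mul_le_mulr (a := cc i1 - 1) (b := cc (i1+1) + 1) hε (by omega)
        push_cast at this h1b h2
        linarith
      · -- above, below : impossible
        exfalso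
        have := mul_le_mulr (a := aa n (i1+1) - 1) (b := cc i1 + 1) hε (by omega)
        push_cast at this h1 h2
        linarith
      · -- above, middle : impossible
        exfalso
        have := mul_le_mulr (a := cc (i1+1) - 1) (b := cc i1 + 1) hε (by omega)
        push_cast at this h1 h2b
        linarith
      · -- above, above
        right; left
        intro i j hb hxa hxb
        rcases hcols i hxa hxb with rfl | ⟨-, rfl⟩
        · exact above_col i1 hcase h1 j hb
        · exact above_col (i1+1) (by omega) (by push_cast at h2 ⊢; linarith) j hb
    · -- single column i1
      have hlt : p.1 < (i1:ℝ)*ε := lt_of_le_of_ne hle hedge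
      rcases hpos1 with h1 | ⟨h1a, h1b⟩ | h1
      · left
        intro i j hb hxa hxb
        rcases hcols i hxa hxb with rfl | ⟨he, -⟩
        · exact below_col i1 hcase h1 j hb
        · exact absurd he hedge
      · -- middle single column
        have gap1 : tt n i1 ≤ cc i1 - 2 := by
          have h := ilt_of_mul hε (a := tt n i1) (b := cc i1 - 1)
            (by push_cast; push_cast at h1a h1b; linarith)
          omega
        by_cases hbig : 12*(n:ℤ)+6 ≤ i1
        · right; right
          rw [Chan, mem_iUnion]
          have hm0 : 0 ≤ i1 - (12*(n:ℤ)+6) := by omega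
          refine ⟨(i1 - (12*(n:ℤ)+6)).toNat, ?_⟩
          have hidx : 12*(n:ℤ)+6+((i1 - (12*(n:ℤ)+6)).toNat : ℤ) = i1 := by
            rw [Int.toNat_of_nonneg hm0]; ring
          rw [hidx]
          exact Or.inl ⟨⟨hgt, hlt⟩, ⟨h1a, h1b⟩⟩
        · push_neg at hbig
          exfalso
          rcases Int.even_or_odd i1 with ⟨m, hm⟩ | ⟨m, hm⟩
          · -- even column
            have hm' : i1 = 2*m := by omega
            have hcc1 : cc i1 = m := by rw [hm']; exact cc_eq (by omega) (by omega)
            obtain ⟨t1s, t2s⟩ := tt_spec n i1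
            have hx : (n:ℤ)*i1 < D n * (m-2) := by
              calc (n:ℤ)*i1 < D n * (tt n i1) := t2s
                _ ≤ D n * (m-2) := mul_le_mul_of_nonneg_left (by omega) (D_pos n).le
            rw [hm'] at hx
            unfold D at hx
            have hm1 : 4*(n:ℤ)+3 ≤ m := by nlinarith
            have hm2 : m ≤ 6*(n:ℤ)+2 := by omega
            have htt1 : tt n i1 = m - 2 := by
              rw [hm']; exact tt_even_band (by omega) (by omega)
            set k : ℤ := m - 4*(n:ℤ) - 3 with hkdef
            apply hh k (by omega) (by omega)
            have hwge : (1:ℤ) ≤ (if k < (n:ℤ) then 1 else 2) := by split <;> omega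
            constructor
            · constructor
              · have he : ((8*(n:ℤ)+5+2*k : ℤ):ℝ) = ((i1 - 1 : ℤ):ℝ) := by
                  exact_mod_cast congrArg (fun z : ℤ => (z:ℝ)) (by omega : (8*(n:ℤ)+5+2*k) = i1 - 1)
                rw [he]
                push_cast at hgt ⊢
                linarith
              · have hbnd : ((i1 : ℤ):ℝ)*ε ≤ ((8*(n:ℤ)+5+2*k + (if k < (n:ℤ) then 1 else 2) : ℤ):ℝ)*ε := by
                  apply mul_le_mulr hε
                  split <;> omega
                push_cast at hbnd hlt ⊢
                linarith
            · constructor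
              · have he : ((4*(n:ℤ)+1+k : ℤ):ℝ) = ((tt n i1 : ℤ):ℝ) := by
                  exact_mod_cast congrArg (fun z : ℤ => (z:ℝ)) (by omega : (4*(n:ℤ)+1+k) = tt n i1)
                rw [he]; exact h1a
              · have he : ((4*(n:ℤ)+2+k : ℤ):ℝ) = ((cc i1 - 1 : ℤ):ℝ) := by
                  exact_mod_cast congrArg (fun z : ℤ => (z:ℝ)) (by omega : (4*(n:ℤ)+2+k) = cc i1 - 1)
                rw [he]
                push_cast at h1b ⊢
                linarith
          · -- odd column
            have hcc1 : cc i1 = m := by rw [hm]; exact cc_odd m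
            obtain ⟨t1s, t2s⟩ := tt_spec n i1
            have hx : (n:ℤ)*i1 < D n * (m-2) := by
              calc (n:ℤ)*i1 < D n * (tt n i1) := t2s
                _ ≤ D n * (m-2) := mul_le_mul_of_nonneg_left (by omega) (D_pos n).le
            rw [hm] at hx
            unfold D at hx
            have hm1 : 5*(n:ℤ)+3 ≤ m := by nlinarith
            have hm2 : m ≤ 6*(n:ℤ)+2 := by omega
            have htt1 : tt n i1 = m - 2 := by
              have he : i1 = 8*(n:ℤ)+5+2*(m-4*(n:ℤ)-2) := by omega
              rw [he]
              have := tt_odd_hi (n := n) (k := m-4*(n:ℤ)-2) (by omega) (by omega)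
              omega
            set k : ℤ := m - 4*(n:ℤ) - 3 with hkdef
            apply hh k (by omega) (by omega)
            have hkn : ¬ (k < (n:ℤ)) := by omega
            constructor
            · constructor
              · have hle2 : ((8*(n:ℤ)+5+2*k : ℤ):ℝ)*ε ≤ ((i1 - 1 : ℤ):ℝ)*ε := by
                  apply mul_le_mulr hε; omega
                push_cast at hle2 hgt ⊢
                linarith
              · rw [if_neg hkn]
                have he2 : ((8*(n:ℤ)+5+2*k + 2 : ℤ):ℝ)*ε = ((i1 : ℤ):ℝ)*ε := by
                  have : (8*(n:ℤ)+5+2*k + 2 : ℤ) = i1 := by omega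
                  rw [this]
                push_cast at he2 hlt ⊢
                linarith
            · constructor
              · have he : ((4*(n:ℤ)+1+k : ℤ):ℝ) = ((tt n i1 : ℤ):ℝ) := by
                  exact_mod_cast congrArg (fun z : ℤ => (z:ℝ)) (by omega : (4*(n:ℤ)+1+k) = tt n i1)
                rw [he]; exact h1a
              · have he : ((4*(n:ℤ)+2+k : ℤ):ℝ) = ((cc i1 - 1 : ℤ):ℝ) := by
                  exact_mod_cast congrArg (fun z : ℤ => (z:ℝ)) (by omega : (4*(n:ℤ)+2+k) = cc i1 - 1)
                rw [he]
                push_cast at h1b ⊢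
                linarith
      · right; left
        intro i j hb hxa hxb
        rcases hcols i hxa hxb with rfl | ⟨he, -⟩
        · exact above_col i1 hcase h1 j hb
        · exact absurd he hedge
  · -- i1 ≤ 0 : near or left of the origin
    push_neg at hcase
    have hi10 : i1 ≤ 0 := by omega
    have hx0 : p.1 ≤ 0 := by
      have : ((i1:ℤ):ℝ)*ε ≤ 0 := by
        apply mul_nonpos_of_nonpos_of_nonneg _ hε.le
        exact_mod_cast hi10
      linarith
    by_cases hc0 : p.1 < -ε
    · -- entirely to the left: no blocks in columns of p
      left
      intro i j hb hxa hxb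
      exfalso
      have hi0 : 0 ≤ i := by
        rcases hb with ⟨h, -⟩ | ⟨h, -⟩ <;> omega
      have : ((-1 : ℤ):ℝ)*ε ≤ ((i - 1 : ℤ):ℝ)*ε := mul_le_mulr hε (by omega)
      push_cast at this hxa
      linarith
    · push_neg at hc0
      -- p is in the y-range excluded by column 0 pixels
      have hb00 : Blk n 0 0 := Or.inr ⟨rfl, Or.inl rfl⟩
      have hb01 : Blk n 0 1 := Or.inr ⟨rfl, Or.inr rfl⟩
      have hnp0 := hp 0 0 hb00
      have hnp1 := hp 0 1 hb01
      rw [mem_pixel] at hnp0 hnp1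
      push_neg at hnp0 hnp1
      have hxc1 : (((0:ℤ):ℝ)-1)*ε ≤ p.1 := by push_cast; linarith
      have hxc2 : p.1 ≤ ((0:ℤ):ℝ)*ε := by push_cast; linarith
      have hyd : p.2 < -ε ∨ ε < p.2 := by
        by_contra hcon
        push_neg at hcon
        obtain ⟨hy1, hy2⟩ := hcon
        rcases le_or_gt p.2 0 with hy0 | hy0
        · have := hnp0 hxc1 hxc2 (by push_cast; linarith)
          push_cast at this
          linarith
        · have := hnp1 hxc1 hxc2 (by push_cast; linarith)
          push_cast at this
          linarith
      -- any block pixel containing p.1 has 0 ≤ j ≤ 1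
      have hj01 : ∀ i j : ℤ, Blk n i j → ((i:ℝ)-1)*ε ≤ p.1 → p.1 ≤ (i:ℝ)*ε →
          0 ≤ j ∧ j ≤ 1 := by
        intro i j hb hxa hxb
        have hile : i ≤ 1 := by
          have h := ile_of_mul hε (a := i - 1) (b := 0) (by push_cast; push_cast at hxa; linarith)
          omega
        rcases hb with ⟨hi1', hbb⟩ | ⟨-, hj⟩
        · have hi1'' : i = 1 := by omega
          subst hi1''
          rw [aa_one, tt_one, cc_one] at hbb
          omega
        · omega
      rcases hyd with hyd | hyd
      · left
        intro i j hb hxa hxb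
        have := hj01 i j hb hxa hxb
        have hjr : ((-1 : ℤ):ℝ)*ε ≤ ((j - 1 : ℤ):ℝ)*ε := mul_le_mulr hε (by omega)
        push_cast at hjr ⊢
        linarith
      · right; left
        intro i j hb hxa hxb
        have := hj01 i j hb hxa hxb
        have hjr : ((j : ℤ):ℝ)*ε ≤ ((1 : ℤ):ℝ)*ε := mul_le_mulr hε (by omega)
        push_cast at hjr ⊢
        linarith

end escape

end FA

/-- For every positive integer n and every ε > 0, the ε-pixelation of the
angle A(1/2, n/(2n+1)) has exactly 2n holes. -/
theorem holes_of_farey_angle (n : ℕ) (hn : 0 < n) (ε : ℝ) (hε : 0 < ε) :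
    Nat.card (holes (pixelation ε (angle (1 / 2) ((n : ℝ) / (2 * n + 1))))) =
      2 * n := by
  have key : holes (pixelation ε (angle (1 / 2) ((n : ℝ) / (2 * n + 1)))) =
      (fun k : ℤ => FA.holeSet n ε k) '' (Set.Ico (0:ℤ) (2*(n:ℤ))) := by
    ext C
    constructor
    · rintro ⟨⟨x, hxc, rfl⟩, hbd⟩
      by_cases hex : ∃ k : ℤ, (0 ≤ k ∧ k < 2*(n:ℤ)) ∧ x ∈ FA.holeSet n ε k
      · obtain ⟨k, ⟨hk0, hk1⟩, hx⟩ := hex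
        refine ⟨k, Set.mem_Ico.mpr ⟨hk0, hk1⟩, ?_⟩
        exact (FA.holeSet_comp hn hε k hk0 hk1 hx).symm
      · exfalso
        push_neg at hex
        have hav : FA.Avoids n ε x := fun i j hb =>
          ((FA.mem_compl_X_iff n hn hε).mp hxc) i j hb
        have hnh : ∀ k : ℤ, 0 ≤ k → k < 2*(n:ℤ) → x ∉ FA.holeSet n ε k :=
          fun k h0 h1 => hex k ⟨h0, h1⟩
        have hsub : ∀ T : Set (ℝ×ℝ), (∀ q ∈ T, FA.Avoids n ε q) →
            T ⊆ (pixelation ε (angle (1 / 2) ((n : ℝ) / (2 * n + 1))))ᶜ := by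
          intro T hT q hq
          exact (FA.mem_compl_X_iff n hn hε).mpr (hT q hq)
        rcases FA.classify hn hε hav hnh with hB | hA | hC
        · obtain ⟨T, hT1, hT2, hT3, hT4⟩ := FA.escape_down hn hε hB
          exact FA.comp_unbounded hT1 (hsub T hT2) hT3 hT4 hbd
        · obtain ⟨T, hT1, hT2, hT3, hT4⟩ := FA.escape_up hn hε hA
          exact FA.comp_unbounded hT1 (hsub T hT2) hT3 hT4 hbd
        · exact FA.comp_unbounded (FA.chan_preconnected hn hε)
            (hsub _ (FA.chan_avoids hn hε)) hC (FA.chan_unbounded hn hε) hbd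
    · rintro ⟨k, hk, rfl⟩
      rw [Set.mem_Ico] at hk
      obtain ⟨hk0, hk1⟩ := hk
      have hx0 := FA.holeSet_nonempty (n := n) hε k
      refine ⟨⟨_, FA.holeSet_sub hn hε k hk0 hk1 hx0,
        (FA.holeSet_comp hn hε k hk0 hk1 hx0).symm⟩, FA.holeSet_bounded (n := n) (ε := ε) k⟩
  rw [key, Nat.card_coe_set_eq]
  have hinj : Set.InjOn (fun k : ℤ => FA.holeSet n ε k) (Set.Ico (0:ℤ) (2*(n:ℤ))) := by
    intro k1 hk1 k2 hk2 heq
    have hx0 := FA.holeSet_nonempty (n := n) hε k1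
    simp only at heq
    rw [heq] at hx0
    have hy := hx0.2
    rw [Set.mem_Ioo] at hy
    obtain ⟨hy1, hy2⟩ := hy
    have l1 : (2*(4*(n:ℤ)+1+k2) : ℤ) < 2*(4*(n:ℤ)+1+k1) + 1 := by
      apply FA.ilt_of_mul hε
      push_cast
      push_cast at hy1
      linarith
    have l2 : (2*(4*(n:ℤ)+1+k1) + 1 : ℤ) < 2*(4*(n:ℤ)+2+k2) := by
      apply FA.ilt_of_mul hε
      push_cast
      push_cast at hy2
      linarith
    omega
  rw [Set.ncard_image_of_injOn hinj, ← Finset.coe_Ico, Set.ncard_coe_finset]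
  rw [Int.card_Ico]
  omega
end
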